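/- arXiv:2106.08871 — 6 statements merged into one kernel-verified Lean document; each statement's English description precedes it below -/
import Mathlib

section
/- Let t ≥ 2 and q ≥ 2 be integers, let G be a finite t-broom-free graph, and let V_1, …, V_q be pairwise disjoint nonempty independent sets in G such that Q := G[V_1 ∪ ⋯ ∪ V_q] is a complete q-partite graph with parts V_1, …, V_q. Suppose that no vertex of N(V(Q)) is complete to V(Q). If R is a positive integer with the Ramsey property for (t, ω(G)), then every vertex of N^{≥2}(V(Q)) has fewer than 3R neighbors in N^{≥2}(V(Q)); that is, Δ(G[N^{≥2}(V(Q))]) < 3R. -/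
open SimpleGraph

/-- The `t`-broom: `K_{1,t+1}` with one edge subdivided once.
Vertex `0` is `u₀`, vertex `1` is `v₁`, vertex `2` is `v₂`,
and vertices `3, …, t+2` are `u₁, …, u_t`. -/
def tBroom (t : ℕ) : SimpleGraph (Fin (t + 3)) :=
  SimpleGraph.fromRel (fun a b =>
    (a = 0 ∧ b = 1) ∨ (a = 1 ∧ b = 2) ∨ (a = 0 ∧ 3 ≤ b.val))

/-- `G` is `H`-free: no induced subgraph of `G` is isomorphic to `H`.
(A graph embedding `H ↪g G` is exactly an isomorphism of `H` onto an induced subgraph of `G`.) -/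
def Free {V W : Type*} (G : SimpleGraph V) (H : SimpleGraph W) : Prop :=
  ¬ Nonempty (H ↪g G)

/-- The neighborhood `N(S)` of a set `S`: vertices outside `S` with a neighbor in `S`. -/
def nbhd {V : Type*} (G : SimpleGraph V) (S : Set V) : Set V :=
  {v | v ∉ S ∧ ∃ u ∈ S, G.Adj u v}

/-- `v` is complete to `S`: adjacent to every vertex of `S`. -/
def CompleteTo {V : Type*} (G : SimpleGraph V) (v : V) (S : Set V) : Prop :=
  ∀ u ∈ S, G.Adj v u

/-- `v` is anticomplete to `S`: adjacent to no vertex of `S`. -/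
def AnticompleteTo {V : Type*} (G : SimpleGraph V) (v : V) (S : Set V) : Prop :=
  ∀ u ∈ S, ¬ G.Adj v u

/-- `v` is neutral to `S`: neither complete nor anticomplete to `S`. -/
def NeutralTo {V : Type*} (G : SimpleGraph V) (v : V) (S : Set V) : Prop :=
  ¬ CompleteTo G v S ∧ ¬ AnticompleteTo G v S

/-- `S` is an independent set of size `s` in `G`. -/
def IsNIndepSet' {V : Type*} (G : SimpleGraph V) (s : ℕ) (S : Finset V) : Prop :=
  S.card = s ∧ ∀ u ∈ S, ∀ v ∈ S, u ≠ v → ¬ G.Adj u v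

/-- `R` has the Ramsey property for `(s, n)`: every finite simple graph on at least `R`
vertices contains an independent set of size `s` or a clique of size `n`. -/
def RamseyProp (R s n : ℕ) : Prop :=
  ∀ (W : Type) [Fintype W] (H : SimpleGraph W), R ≤ Fintype.card W →
    (∃ S : Finset W, IsNIndepSet' H s S) ∨ (∃ S : Finset W, H.IsNClique n S)

/-- The distance (in `ℕ∞`) from a set `S` to a vertex `v`:
the minimum over `u ∈ S` of the distance from `u` to `v`. -/
noncomputable def eDistSet {V : Type*} (G : SimpleGraph V) (S : Set V) (v : V) : ℕ∞ :=
  ⨅ u ∈ S, G.edist u v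

/-- `N^i(S)`: the set of vertices (outside `S`) at distance exactly `i` from `S`. -/
noncomputable def distNbhd {V : Type*} (G : SimpleGraph V) (S : Set V) (i : ℕ) : Set V :=
  {v | v ∉ S ∧ eDistSet G S v = (i : ℕ∞)}

/-- `N^{≥ i}(S) = ⋃_{j ≥ i} N^j(S)`. -/
noncomputable def distNbhdGe {V : Type*} (G : SimpleGraph V) (S : Set V) (i : ℕ) : Set V :=
  ⋃ j ∈ {j : ℕ | i ≤ j}, distNbhd G S j

/-- Given the union `U = V_1 ∪ ⋯ ∪ V_{q-1}` and the last part `Vq`, the set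
`W_I = {v ∈ W : v complete to I, anticomplete to U \ I}`, where
`W = {v ∈ N(U ∪ Vq) : v anticomplete to Vq}`. -/
def Wpart {V : Type*} (G : SimpleGraph V) (U Vq I : Set V) : Set V :=
  {v ∈ nbhd G (U ∪ Vq) | AnticompleteTo G v Vq ∧ CompleteTo G v I ∧
    AnticompleteTo G v (U \ I)}


section AuxDist
variable {V : Type*} {G : SimpleGraph V} {S : Set V} {v u a b : V}

lemma eDistSet_le (hu : u ∈ S) : eDistSet G S v ≤ G.edist u v := iInf₂_le u hu

lemma eDistSet_attained {m : ℕ} (h : eDistSet G S v = m) : ∃ u ∈ S, G.edist u v = m := by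
  have hlt : eDistSet G S v < (m : ℕ∞) + 1 := by
    rw [h]; exact_mod_cast Nat.lt_succ_self m
  rw [eDistSet, iInf_lt_iff] at hlt
  obtain ⟨u, hu⟩ := hlt
  rw [iInf_lt_iff] at hu
  obtain ⟨huS, hlt⟩ := hu
  refine ⟨u, huS, le_antisymm ?_ ?_⟩
  · exact Order.le_of_lt_add_one hlt
  · rw [← h]; exact eDistSet_le huS

lemma eDistSet_zero_of_mem (hv : v ∈ S) : eDistSet G S v = 0 :=
  le_antisymm (by simpa using eDistSet_le (G := G) (v := v) hv) zero_le

lemma mem_of_eDistSet_zero (h : eDistSet G S v = 0) : v ∈ S := by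
  obtain ⟨u, huS, hu⟩ := eDistSet_attained (m := 0) (by simpa using h)
  rw [show ((0:ℕ):ℕ∞) = 0 by simp, SimpleGraph.edist_eq_zero_iff] at hu
  exact hu ▸ huS

lemma eDistSet_adj_le (hadj : G.Adj a b) : eDistSet G S b ≤ eDistSet G S a + 1 := by
  by_cases htop : eDistSet G S a = ⊤
  · rw [htop]; simp
  · lift eDistSet G S a to ℕ using htop with m hm
    obtain ⟨u, huS, hu⟩ := eDistSet_attained hm.symm
    calc eDistSet G S b ≤ G.edist u b := eDistSet_le huS
    _ ≤ G.edist u a + G.edist a b := SimpleGraph.edist_triangle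
    _ ≤ (m : ℕ∞) + 1 := by
        rw [hu, SimpleGraph.edist_eq_one_iff_adj.mpr hadj]

lemma eDistSet_step_down {j : ℕ} (h : eDistSet G S v = ((j + 1 : ℕ) : ℕ∞)) :
    ∃ w, G.Adj v w ∧ eDistSet G S w = j := by
  obtain ⟨u, huS, hu⟩ := eDistSet_attained h
  obtain ⟨p, hp⟩ := SimpleGraph.exists_walk_of_edist_eq_coe hu
  cases hq : p.reverse with
  | nil =>
    exfalso
    have h0 : p.reverse.length = 0 := by rw [hq]; rfl
    rw [SimpleGraph.Walk.length_reverse, hp] at h0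
    omega
  | @cons _ w _ hadj q =>
    refine ⟨w, hadj, le_antisymm ?_ ?_⟩
    · calc eDistSet G S w ≤ G.edist u w := eDistSet_le huS
      _ = G.edist w u := SimpleGraph.edist_comm
      _ ≤ (q.length : ℕ∞) := SimpleGraph.edist_le q
      _ ≤ (j : ℕ∞) := by
          have : p.reverse.length = j + 1 := by rw [SimpleGraph.Walk.length_reverse, hp]
          rw [hq] at this
          simp only [SimpleGraph.Walk.length_cons] at this
          exact_mod_cast Nat.le_of_eq (by omega)
    · have h1 : eDistSet G S v ≤ eDistSet G S w + 1 := eDistSet_adj_le hadj.symm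
      rw [h] at h1
      by_cases htop : eDistSet G S w = ⊤
      · rw [htop]; exact le_top
      · lift eDistSet G S w to ℕ using htop with k hk
        have : (j + 1 : ℕ) ≤ k + 1 := by exact_mod_cast h1
        exact_mod_cast Nat.le_of_succ_le_succ this
end AuxDist

lemma tBroom_adj {t : ℕ} (a b : Fin (t + 3)) :
    (tBroom t).Adj a b ↔ a.val ≠ b.val ∧
      ((a.val = 0 ∧ b.val = 1) ∨ (a.val = 1 ∧ b.val = 2) ∨ (a.val = 0 ∧ 3 ≤ b.val) ∨
       (b.val = 0 ∧ a.val = 1) ∨ (b.val = 1 ∧ a.val = 2) ∨ (b.val = 0 ∧ 3 ≤ a.val)) := by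
  have h0 : ((0 : Fin (t+3)) : ℕ) = 0 := rfl
  have h1 : ((1 : Fin (t+3)) : ℕ) = 1 := rfl
  have h2 : ((2 : Fin (t+3)) : ℕ) = 2 := rfl
  rw [tBroom, SimpleGraph.fromRel_adj]
  constructor
  · rintro ⟨hne, h⟩
    refine ⟨fun hv => hne (Fin.ext hv), ?_⟩
    rcases h with (⟨ha,hb⟩|⟨ha,hb⟩|⟨ha,hb⟩)|(⟨ha,hb⟩|⟨ha,hb⟩|⟨ha,hb⟩) <;>
      subst ha <;> (try subst hb) <;> simp_all
  · rintro ⟨hne, h⟩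
    refine ⟨fun hv => hne (by rw [hv]), ?_⟩
    have e0 : ∀ c : Fin (t+3), c.val = 0 → c = 0 := fun c hc => Fin.ext (by rw [hc, h0])
    have e1 : ∀ c : Fin (t+3), c.val = 1 → c = 1 := fun c hc => Fin.ext (by rw [hc, h1])
    have e2 : ∀ c : Fin (t+3), c.val = 2 → c = 2 := fun c hc => Fin.ext (by rw [hc, h2])
    rcases h with ⟨ha,hb⟩|⟨ha,hb⟩|⟨ha,hb⟩|⟨ha,hb⟩|⟨ha,hb⟩|⟨ha,hb⟩
    · exact Or.inl (Or.inl ⟨e0 a ha, e1 b hb⟩)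
    · exact Or.inl (Or.inr (Or.inl ⟨e1 a ha, e2 b hb⟩))
    · exact Or.inl (Or.inr (Or.inr ⟨e0 a ha, hb⟩))
    · exact Or.inr (Or.inl ⟨e0 b ha, e1 a hb⟩)
    · exact Or.inr (Or.inr (Or.inl ⟨e1 b ha, e2 a hb⟩))
    · exact Or.inr (Or.inr (Or.inr ⟨e0 b ha, hb⟩))

section Broom
variable {V : Type*} {G : SimpleGraph V}

lemma broom_contradiction {t : ℕ} (hfree : _root_.Free G (tBroom t))
    {u0 v1 v2 : V} (u : Fin t → V) (hinj : Function.Injective u)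
    (h01 : G.Adj u0 v1) (h12 : G.Adj v1 v2) (h02 : ¬ G.Adj u0 v2) (hne02 : u0 ≠ v2)
    (h0u : ∀ i, G.Adj u0 (u i)) (h1u : ∀ i, ¬ G.Adj v1 (u i)) (h2u : ∀ i, ¬ G.Adj v2 (u i))
    (hne1 : ∀ i, u i ≠ v1) (hne2 : ∀ i, u i ≠ v2)
    (huu : ∀ i j, i ≠ j → ¬ G.Adj (u i) (u j)) : False := by
  apply hfree
  set f : Fin (t + 3) → V := fun a =>
    if h0 : a.val = 0 then u0 else if h1 : a.val = 1 then v1 else if h2 : a.val = 2 then v2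
    else u ⟨a.val - 3, by omega⟩ with hf
  have hcase : ∀ a : Fin (t+3), (a.val = 0 ∧ f a = u0) ∨ (a.val = 1 ∧ f a = v1) ∨
      (a.val = 2 ∧ f a = v2) ∨ ∃ k : Fin t, a.val = k.val + 3 ∧ f a = u k := by
    intro a
    rcases Nat.lt_or_ge a.val 3 with h3 | h3
    · interval_cases h : a.val
      · exact Or.inl ⟨rfl, by simp only [hf]; rw [dif_pos h]⟩
      · exact Or.inr (Or.inl ⟨rfl, by simp only [hf]; rw [dif_neg (by omega), dif_pos h]⟩)
      · exact Or.inr (Or.inr (Or.inl ⟨rfl, by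
          simp only [hf]; rw [dif_neg (by omega), dif_neg (by omega), dif_pos h]⟩))
    · refine Or.inr (Or.inr (Or.inr ⟨⟨a.val - 3, by omega⟩,
        by show a.val = a.val - 3 + 3; omega, ?_⟩))
      simp only [hf]
      rw [dif_neg (by omega), dif_neg (by omega), dif_neg (by omega)]
  have d01 : u0 ≠ v1 := h01.ne
  have d12 : v1 ≠ v2 := h12.ne
  have d0u : ∀ i, u0 ≠ u i := fun i => (h0u i).ne
  refine ⟨⟨⟨f, ?_⟩, ?_⟩⟩
  · intro a b hab
    rcases hcase a with ⟨ha, ea⟩ | ⟨ha, ea⟩ | ⟨ha, ea⟩ | ⟨k, ha, ea⟩ <;>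
      rcases hcase b with ⟨hb, eb⟩ | ⟨hb, eb⟩ | ⟨hb, eb⟩ | ⟨l, hb, eb⟩ <;>
      rw [ea, eb] at hab <;> try (exact Fin.ext (by omega))
    · exact absurd hab d01
    · exact absurd hab hne02
    · exact absurd hab (d0u l)
    · exact absurd hab.symm d01
    · exact absurd hab d12
    · exact absurd hab.symm (hne1 l)
    · exact absurd hab.symm hne02
    · exact absurd hab.symm d12
    · exact absurd hab.symm (hne2 l)
    · exact absurd hab.symm (d0u k)
    · exact absurd hab (hne1 k)
    · exact absurd hab (hne2 k)
    · exact Fin.ext (by have := congrArg Fin.val (hinj hab); omega)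
  · intro a b
    show G.Adj (f a) (f b) ↔ (tBroom t).Adj a b
    rw [tBroom_adj]
    rcases hcase a with ⟨ha, ea⟩ | ⟨ha, ea⟩ | ⟨ha, ea⟩ | ⟨k, ha, ea⟩ <;>
      rcases hcase b with ⟨hb, eb⟩ | ⟨hb, eb⟩ | ⟨hb, eb⟩ | ⟨l, hb, eb⟩ <;>
      rw [ea, eb] <;> constructor <;> intro h
    · exact absurd h (G.irrefl)
    · omega
    · exact ⟨by omega, by omega⟩
    · exact h01
    · exact absurd h h02
    · omega
    · exact ⟨by omega, by omega⟩
    · exact h0u l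
    · exact ⟨by omega, by omega⟩
    · exact h01.symm
    · exact absurd h (G.irrefl)
    · omega
    · exact ⟨by omega, by omega⟩
    · exact h12
    · exact absurd h ((h1u l))
    · omega
    · exact absurd h (fun hh => h02 hh.symm)
    · omega
    · exact ⟨by omega, by omega⟩
    · exact h12.symm
    · exact absurd h (G.irrefl)
    · omega
    · exact absurd h (h2u l)
    · omega
    · exact ⟨by omega, by omega⟩
    · exact (h0u k).symm
    · exact absurd h (fun hh => h1u k hh.symm)
    · omega
    · exact absurd h (fun hh => h2u k hh.symm)
    · omega
    · exact absurd h (fun hh => huu k l (fun he => by subst he; exact G.irrefl hh) hh)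
    · omega
end Broom

section Star
variable {V : Type} [Fintype V] {G : SimpleGraph V}

lemma star_lemma {t R : ℕ} (hfree : _root_.Free G (tBroom t)) (hRam : RamseyProp R t G.cliqueNum)
    {v v1 v2 : V} (h1 : G.Adj v v1) (h2 : G.Adj v1 v2) (h3 : ¬ G.Adj v v2) (h4 : v ≠ v2)
    {A : Set V} (hAv : ∀ y ∈ A, G.Adj v y)
    (hA1 : ∀ y ∈ A, ¬ G.Adj v1 y ∧ y ≠ v1) (hA2 : ∀ y ∈ A, ¬ G.Adj v2 y ∧ y ≠ v2)
    (hcard : R ≤ A.ncard) : False := by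
  classical
  haveI : Fintype ↥A := Fintype.ofFinite ↥A
  have hcardA : A.ncard = Fintype.card ↥A := by
    rw [← Nat.card_coe_set_eq, Nat.card_eq_fintype_card]
  rcases hRam ↥A (G.comap (Subtype.val : ↥A → V)) (by omega) with ⟨T, hT, hTind⟩ | ⟨T, hTcl⟩
  · set e : Fin t ≃ ↥T := (T.equivFinOfCardEq hT).symm with he
    set u : Fin t → V := fun i => (((e i : ↥T) : ↥A) : V) with hu
    have humem : ∀ i, (u i) ∈ A := fun i => ((e i : ↥T) : ↥A).2
    have hinj : Function.Injective u := by
      intro i j hij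
      exact e.injective (Subtype.ext (Subtype.ext hij))
    refine broom_contradiction hfree u hinj h1 h2 h3 h4
      (fun i => hAv _ (humem i)) (fun i => (hA1 _ (humem i)).1) (fun i => (hA2 _ (humem i)).1)
      (fun i => (hA1 _ (humem i)).2) (fun i => (hA2 _ (humem i)).2) ?_
    intro i j hij hadj
    refine hTind _ (e i).2 _ (e j).2 ?_ hadj
    intro heq
    exact hij (e.injective (Subtype.ext heq))
  · set T' : Finset V := T.image (fun a : ↥A => (a : V)) with hT'
    have hT'card : T'.card = G.cliqueNum := by
      rw [hT', Finset.card_image_of_injective _ Subtype.val_injective]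
      exact hTcl.2
    have hT'mem : ∀ y ∈ T', y ∈ A := by
      intro y hy
      simp only [hT', Finset.mem_image] at hy
      obtain ⟨a, _, rfl⟩ := hy
      exact a.2
    have hvT' : v ∉ T' := fun hv => G.irrefl (hAv v (hT'mem v hv))
    have hclV : G.IsClique (insert v T' : Finset V) := by
      intro a ha b hb hab
      simp only [Finset.coe_insert, Set.mem_insert_iff, Finset.mem_coe] at ha hb
      rcases ha with rfl | ha
      · rcases hb with rfl | hb
        · exact absurd rfl hab
        · exact hAv b (hT'mem b hb)
      · rcases hb with rfl | hb
        · exact (hAv a (hT'mem a ha)).symm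
        · simp only [hT', Finset.mem_image] at ha hb
          obtain ⟨a', ha', rfl⟩ := ha
          obtain ⟨b', hb', rfl⟩ := hb
          exact hTcl.1 (Finset.mem_coe.mpr ha') (Finset.mem_coe.mpr hb')
            (fun heq => hab (by rw [heq]))
    have hle : (insert v T').card ≤ G.cliqueNum :=
      SimpleGraph.IsClique.card_le_cliqueNum (tc := hclV)
    rw [Finset.card_insert_of_notMem hvT', hT'card] at hle
    omega
end Star

/-- Lemma 2.1. Let `t, q ≥ 2`, let `G` be a finite `t`-broom-free graph and
`V_1, …, V_q` pairwise disjoint nonempty independent sets such that `Q = G[V_1 ∪ ⋯ ∪ V_q]` is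
complete `q`-partite with parts `V_1, …, V_q`.  If no vertex of `N(V(Q))` is complete to `V(Q)`
and `R` has the Ramsey property for `(t, ω(G))`, then every vertex of `N^{≥2}(V(Q))` has fewer
than `3R` neighbors in `N^{≥2}(V(Q))`. -/
theorem maxDegree_distGeTwo_lt (t q : ℕ) (ht : 2 ≤ t) (hq : 2 ≤ q)
    (V : Type) [Fintype V] (G : SimpleGraph V) (hfree : _root_.Free G (tBroom t))
    (Vs : Fin q → Set V)
    (hne : ∀ i, (Vs i).Nonempty)
    (hdisj : ∀ i j, i ≠ j → Disjoint (Vs i) (Vs j))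
    (hindep : ∀ i, ∀ u ∈ Vs i, ∀ w ∈ Vs i, ¬ G.Adj u w)
    (hcomp : ∀ i j, i ≠ j → ∀ u ∈ Vs i, ∀ w ∈ Vs j, G.Adj u w)
    (hnotfull : ∀ x ∈ nbhd G (⋃ i, Vs i), ¬ CompleteTo G x (⋃ i, Vs i))
    (R : ℕ) (hR : 0 < R) (hRam : RamseyProp R t G.cliqueNum) :
    ∀ x ∈ distNbhdGe G (⋃ i, Vs i) 2,
      ({y ∈ distNbhdGe G (⋃ i, Vs i) 2 | G.Adj x y}).ncard < 3 * R := by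
  classical
  intro x hx
  set S := ⋃ i, Vs i with hS
  have hmem : ∀ z, z ∈ distNbhdGe G S 2 ↔ z ∉ S ∧ ∃ d : ℕ, 2 ≤ d ∧ eDistSet G S z = d := by
    intro z
    simp only [distNbhdGe, distNbhd, Set.mem_iUnion, Set.mem_setOf_eq]
    constructor
    · rintro ⟨j, hj, hz, hzd⟩; exact ⟨hz, j, hj, hzd⟩
    · rintro ⟨hz, j, hj, hzd⟩; exact ⟨j, hj, hz, hzd⟩
  obtain ⟨hxS, d, hd2, hdx⟩ := (hmem x).1 hx
  by_contra hcon
  push_neg at hcon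
  set D := {y ∈ distNbhdGe G S 2 | G.Adj x y} with hD
  have hDfacts : ∀ y ∈ D, G.Adj x y ∧ (2:ℕ∞) ≤ eDistSet G S y ∧ y ∉ S := by
    intro y hy
    obtain ⟨hy1, hy2⟩ := hy
    obtain ⟨hyS, e, he2, hey⟩ := (hmem y).1 hy1
    refine ⟨hy2, ?_, hyS⟩
    rw [hey]
    exact_mod_cast he2
  have farS : ∀ y, (2:ℕ∞) ≤ eDistSet G S y → ∀ s ∈ S, ¬ G.Adj s y ∧ y ≠ s := by
    intro y h2 s hs
    constructor
    · intro hadj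
      have h1 := eDistSet_le (G := G) (v := y) hs
      rw [SimpleGraph.edist_eq_one_iff_adj.mpr hadj] at h1
      have h21 : (2:ℕ∞) ≤ 1 := le_trans h2 h1
      norm_num at h21
    · rintro rfl
      rw [eDistSet_zero_of_mem hs] at h2
      norm_num at h2
  have qpair : ∀ w, eDistSet G S w = 1 →
      ∃ a b, a ∈ S ∧ b ∈ S ∧ G.Adj w a ∧ ¬ G.Adj w b ∧ G.Adj a b ∧ w ≠ b := by
    intro w hw
    have hwS : w ∉ S := by
      intro hmem'
      rw [eDistSet_zero_of_mem hmem'] at hw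
      norm_num at hw
    obtain ⟨z, hz, hz0⟩ := eDistSet_step_down (j := 0) (by rw [hw]; norm_num)
    have hzS : z ∈ S := mem_of_eDistSet_zero (by rw [hz0]; norm_num)
    have hwnb : w ∈ nbhd G S := ⟨hwS, z, hzS, hz.symm⟩
    have hnc := hnotfull w hwnb
    rw [CompleteTo] at hnc
    push_neg at hnc
    obtain ⟨b0, hb0S, hb0⟩ := hnc
    obtain ⟨i, hzi⟩ := Set.mem_iUnion.mp hzS
    obtain ⟨i', hbi⟩ := Set.mem_iUnion.mp hb0S
    have hwb0 : w ≠ b0 := fun he => hwS (he ▸ hb0S)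
    by_cases hii : i = i'
    · subst hii
      obtain ⟨j, hj⟩ : ∃ j : Fin q, j ≠ i :=
        ⟨if h : i.val = 0 then ⟨1, by omega⟩ else ⟨0, by omega⟩, by
          split <;> (intro he; apply_fun Fin.val at he; simp_all)⟩
      obtain ⟨c, hc⟩ := hne j
      have hcS : c ∈ S := Set.mem_iUnion.mpr ⟨j, hc⟩
      by_cases hwc : G.Adj w c
      · exact ⟨c, b0, hcS, hb0S, hwc, hb0, hcomp j i hj c hc b0 hbi, hwb0⟩
      · refine ⟨z, c, hzS, hcS, hz, hwc, (hcomp j i hj c hc z hzi).symm, ?_⟩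
        exact fun he => hwS (he ▸ hcS)
    · exact ⟨z, b0, hzS, hb0S, hz, hb0, hcomp i i' hii z hzi b0 hbi, hwb0⟩
  -- the path vertices p1, p2
  obtain ⟨p1, hxp1, hp1⟩ := eDistSet_step_down (j := d - 1)
    (by rw [hdx]; congr 1; omega)
  obtain ⟨p2, hp12, hp2⟩ := eDistSet_step_down (j := d - 2)
    (by rw [hp1]; congr 1; omega)
  have keylow : ∀ y ∈ D, ∀ m : ℕ, eDistSet G S y ≤ (m:ℕ∞) → d ≤ m + 1 := by
    intro y hy m hm
    have hadj := (hDfacts y hy).1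
    have h1 : eDistSet G S x ≤ eDistSet G S y + 1 := eDistSet_adj_le hadj.symm
    rw [hdx] at h1
    have h2 : (d:ℕ∞) ≤ (m:ℕ∞) + 1 := le_trans h1 (add_le_add_left hm 1)
    exact_mod_cast h2
  have hxp2 : ¬ G.Adj x p2 := by
    intro hadj
    have h1 : eDistSet G S x ≤ eDistSet G S p2 + 1 := eDistSet_adj_le hadj.symm
    rw [hdx, hp2] at h1
    have h2 : d ≤ (d - 2) + 1 := by exact_mod_cast h1
    omega
  have hxnep2 : x ≠ p2 := by
    intro he
    rw [he, hp2] at hdx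
    have : d - 2 = d := by exact_mod_cast hdx
    omega
  set Cs := {y ∈ D | ¬ G.Adj p1 y ∧ ¬ G.Adj p2 y} with hCs
  set Bs := {y ∈ D | G.Adj p2 y} with hBs
  set As := {y ∈ D | G.Adj p1 y ∧ ¬ G.Adj p2 y} with hAs
  have hCbound : ¬ (R ≤ Cs.ncard) := by
    intro hc
    refine star_lemma hfree hRam hxp1 hp12 hxp2 hxnep2 (A := Cs) ?_ ?_ ?_ hc
    · rintro y ⟨hyD, -, -⟩
      exact (hDfacts y hyD).1
    · rintro y ⟨hyD, hn1, hn2⟩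
      exact ⟨hn1, fun he => hn2 (he ▸ hp12.symm)⟩
    · rintro y ⟨hyD, hn1, hn2⟩
      exact ⟨hn2, fun he => hxp2 (he ▸ (hDfacts y hyD).1)⟩
  have hBbound : ¬ (R ≤ Bs.ncard) := by
    intro hc
    rcases Nat.lt_or_ge d 3 with hd3 | hd3
    · have hp2S : p2 ∈ S := mem_of_eDistSet_zero (by rw [hp2]; norm_cast; omega)
      have hBempty : Bs = ∅ := by
        ext y
        simp only [hBs, Set.mem_setOf_eq, Set.mem_empty_iff_false, iff_false, not_and]
        intro hyD hadj
        exact (farS y (hDfacts y hyD).2.1 p2 hp2S).1 hadj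
      rw [hBempty, Set.ncard_empty] at hc
      omega
    · rcases Nat.lt_or_ge d 4 with hd4 | hd4
      · have hp21 : eDistSet G S p2 = 1 := by rw [hp2]; norm_cast; omega
        obtain ⟨a, b, haS, hbS, hwa, hwb, hab, hwneb⟩ := qpair p2 hp21
        refine star_lemma hfree hRam hwa hab hwb hwneb (A := Bs) ?_ ?_ ?_ hc
        · rintro y ⟨hyD, hadj⟩
          exact hadj
        · rintro y ⟨hyD, hadj⟩
          exact farS y (hDfacts y hyD).2.1 a haS
        · rintro y ⟨hyD, hadj⟩
          exact farS y (hDfacts y hyD).2.1 b hbS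
      · obtain ⟨p3, hp23, hp3⟩ := eDistSet_step_down (j := d - 3)
          (by rw [hp2]; congr 1; omega)
        obtain ⟨p4, hp34, hp4⟩ := eDistSet_step_down (j := d - 4)
          (by rw [hp3]; congr 1; omega)
        refine star_lemma hfree hRam hp23 hp34 ?_ ?_ (A := Bs) ?_ ?_ ?_ hc
        · intro hadj
          have h1 : eDistSet G S p2 ≤ eDistSet G S p4 + 1 := eDistSet_adj_le hadj.symm
          rw [hp2, hp4] at h1
          have h2 : d - 2 ≤ (d - 4) + 1 := by exact_mod_cast h1
          omega
        · intro he
          rw [he, hp4] at hp2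
          have : d - 4 = d - 2 := by exact_mod_cast hp2
          omega
        · rintro y ⟨hyD, hadj⟩
          exact hadj
        · rintro y ⟨hyD, hadj⟩
          constructor
          · intro hadjy
            have h1 : eDistSet G S y ≤ eDistSet G S p3 + 1 := eDistSet_adj_le hadjy
            rw [hp3] at h1
            have h2 := keylow y hyD (d - 3 + 1) (by exact_mod_cast h1)
            omega
          · intro he
            subst he
            have h2 := keylow y hyD (d - 3) (le_of_eq hp3)
            omega
        · rintro y ⟨hyD, hadj⟩
          constructor
          · intro hadjy
            have h1 : eDistSet G S y ≤ eDistSet G S p4 + 1 := eDistSet_adj_le hadjy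
            rw [hp4] at h1
            have h2 := keylow y hyD (d - 4 + 1) (by exact_mod_cast h1)
            omega
          · intro he
            subst he
            have h2 := keylow y hyD (d - 4) (le_of_eq hp4)
            omega
  have hAbound : ¬ (R ≤ As.ncard) := by
    intro hc
    rcases Nat.lt_or_ge d 3 with hd3 | hd3
    · have hp11 : eDistSet G S p1 = 1 := by rw [hp1]; norm_cast; omega
      obtain ⟨a, b, haS, hbS, hwa, hwb, hab, hwneb⟩ := qpair p1 hp11
      refine star_lemma hfree hRam hwa hab hwb hwneb (A := As) ?_ ?_ ?_ hc
      · rintro y ⟨hyD, hadj, -⟩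
        exact hadj
      · rintro y ⟨hyD, -, -⟩
        exact farS y (hDfacts y hyD).2.1 a haS
      · rintro y ⟨hyD, -, -⟩
        exact farS y (hDfacts y hyD).2.1 b hbS
    · obtain ⟨p3, hp23, hp3⟩ := eDistSet_step_down (j := d - 3)
        (by rw [hp2]; congr 1; omega)
      refine star_lemma hfree hRam hp12 hp23 ?_ ?_ (A := As) ?_ ?_ ?_ hc
      · intro hadj
        have h1 : eDistSet G S p1 ≤ eDistSet G S p3 + 1 := eDistSet_adj_le hadj.symm
        rw [hp1, hp3] at h1
        have h2 : d - 1 ≤ (d - 3) + 1 := by exact_mod_cast h1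
        omega
      · intro he
        rw [he, hp3] at hp1
        have : d - 3 = d - 1 := by exact_mod_cast hp1
        omega
      · rintro y ⟨hyD, hadj, -⟩
        exact hadj
      · rintro y ⟨hyD, -, hn2⟩
        refine ⟨hn2, ?_⟩
        intro he
        subst he
        have h2 := keylow y hyD (d - 2) (le_of_eq hp2)
        omega
      · rintro y ⟨hyD, -, -⟩
        constructor
        · intro hadjy
          have h1 : eDistSet G S y ≤ eDistSet G S p3 + 1 := eDistSet_adj_le hadjy
          rw [hp3] at h1
          have h2 := keylow y hyD (d - 3 + 1) (by exact_mod_cast h1)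
          omega
        · intro he
          subst he
          have h2 := keylow y hyD (d - 3) (le_of_eq hp3)
          omega
  have hsub : D ⊆ Cs ∪ Bs ∪ As := by
    intro y hy
    by_cases h2 : G.Adj p2 y
    · exact Or.inl (Or.inr ⟨hy, h2⟩)
    · by_cases h1 : G.Adj p1 y
      · exact Or.inr ⟨hy, h1, h2⟩
      · exact Or.inl (Or.inl ⟨hy, h1, h2⟩)
  have hle1 : D.ncard ≤ (Cs ∪ Bs ∪ As).ncard := Set.ncard_le_ncard hsub (Set.toFinite _)
  have hle2 : (Cs ∪ Bs ∪ As).ncard ≤ (Cs ∪ Bs).ncard + As.ncard := Set.ncard_union_le _ _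
  have hle3 : (Cs ∪ Bs).ncard ≤ Cs.ncard + Bs.ncard := Set.ncard_union_le _ _
  omega
end

section
/- Let t ≥ 2 and q ≥ 2 be integers, let G be a finite t-broom-free graph, and let V_1, …, V_q be pairwise disjoint nonempty independent sets in G with |V_q| = t such that Q := G[V_1 ∪ ⋯ ∪ V_q] is a complete q-partite graph with parts V_1, …, V_q. Let W = {v ∈ N(V(Q)) : v is anticomplete to V_q}, and for each I ⊆ V_1 ∪ ⋯ ∪ V_{q-1} let W_I = {v ∈ W : v is complete to I and anticomplete to (V_1 ∪ ⋯ ∪ V_{q-1}) \ I}. Then for any two distinct subsets I, I' of V_1 ∪ ⋯ ∪ V_{q-1}, the set W_I is anticomplete to W_{I'}. -/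
open SimpleGraph

set_option maxHeartbeats 1000000 in
lemma broom_aux {V : Type} (t : ℕ) (ht : 2 ≤ t) (G : SimpleGraph V)
    (hfree : _root_.Free G (tBroom t)) (Vq : Set V) (hVq : Vq.ncard = t)
    (hindepq : ∀ u ∈ Vq, ∀ w ∈ Vq, ¬ G.Adj u w)
    (x w w' : V) (hxVq : x ∉ Vq) (hwVq : w ∉ Vq) (hw'Vq : w' ∉ Vq)
    (hxq : ∀ u ∈ Vq, G.Adj x u)
    (hwq : ∀ u ∈ Vq, ¬ G.Adj w u)
    (hw'q : ∀ u ∈ Vq, ¬ G.Adj w' u)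
    (hxw' : G.Adj x w') (hww' : G.Adj w' w) (hxw : ¬ G.Adj x w) : False := by
  classical
  have hfin : Vq.Finite := Set.finite_of_ncard_ne_zero (by omega)
  have hcard : hfin.toFinset.card = t := by
    rw [Set.ncard_eq_toFinset_card Vq hfin] at hVq; exact hVq
  set em : Fin t → V := fun i => ((Finset.equivFinOfCardEq hcard).symm i : V) with hem
  have hmem : ∀ i, em i ∈ Vq := fun i => by
    have := ((Finset.equivFinOfCardEq hcard).symm i).2
    rwa [Set.Finite.mem_toFinset] at this
  have heminj : Function.Injective em := fun i j h => by
    exact (Finset.equivFinOfCardEq hcard).symm.injective (Subtype.ext h)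
  -- distinctness
  obtain ⟨u0, hu0⟩ : Vq.Nonempty := by
    apply Set.nonempty_of_ncard_ne_zero; omega
  have hxnew : x ≠ w := fun h => hwq u0 hu0 (h ▸ hxq u0 hu0)
  have hxnew' : x ≠ w' := hxw'.ne
  have hwnew' : w ≠ w' := fun h => (G.irrefl (h ▸ hww'))
  let f : Fin (t+3) → V := fun k =>
    if k.val = 0 then x else if k.val = 1 then w' else if k.val = 2 then w
    else em ⟨k.val - 3, by omega⟩
  have f0 : ∀ k : Fin (t+3), k.val = 0 → f k = x := fun k h => by
    simp only [f]; rw [if_pos h]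
  have f1 : ∀ k : Fin (t+3), k.val = 1 → f k = w' := fun k h => by
    simp only [f]; rw [if_neg (by omega), if_pos h]
  have f2 : ∀ k : Fin (t+3), k.val = 2 → f k = w := fun k h => by
    simp only [f]; rw [if_neg (by omega), if_neg (by omega), if_pos h]
  have f3 : ∀ k : Fin (t+3), 3 ≤ k.val → f k = em ⟨k.val - 3, by omega⟩ := fun k h => by
    simp only [f]
    rw [if_neg (by omega), if_neg (by omega), if_neg (by omega)]
  have hval : ∀ k : Fin (t+3), k.val = 0 ∨ k.val = 1 ∨ k.val = 2 ∨ 3 ≤ k.val := fun k => by omega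
  have tadj : ∀ a b : Fin (t+3),
      (tBroom t).Adj a b ↔ (a.val ≠ b.val ∧ ((a.val = 0 ∧ b.val = 1) ∨ (a.val = 1 ∧ b.val = 0)
      ∨ (a.val = 1 ∧ b.val = 2) ∨ (a.val = 2 ∧ b.val = 1)
      ∨ (a.val = 0 ∧ 3 ≤ b.val) ∨ (b.val = 0 ∧ 3 ≤ a.val))) := fun a b => by
    simp only [tBroom, fromRel_adj, Fin.ext_iff, ne_eq, Fin.val_zero, Fin.val_one, Fin.val_two]
    tauto
  have finj : Function.Injective f := by
    intro a b hab
    rcases hval a with ha|ha|ha|ha <;> rcases hval b with hb|hb|hb|hb <;> rw [Fin.ext_iff]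
    · omega
    · exact absurd (f0 a ha ▸ f1 b hb ▸ hab) hxnew'
    · exact absurd (f0 a ha ▸ f2 b hb ▸ hab) hxnew
    · exact absurd ((f0 a ha ▸ f3 b hb ▸ hab) ▸ hmem _) hxVq
    · exact absurd (f1 a ha ▸ f0 b hb ▸ hab).symm hxnew'
    · omega
    · exact absurd (f1 a ha ▸ f2 b hb ▸ hab).symm hwnew'
    · exact absurd ((f1 a ha ▸ f3 b hb ▸ hab) ▸ hmem _) hw'Vq
    · exact absurd (f2 a ha ▸ f0 b hb ▸ hab).symm hxnew
    · exact absurd (f2 a ha ▸ f1 b hb ▸ hab) hwnew'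
    · omega
    · exact absurd ((f2 a ha ▸ f3 b hb ▸ hab) ▸ hmem _) hwVq
    · exact absurd ((f3 a ha ▸ f0 b hb ▸ hab).symm ▸ hmem _) hxVq
    · exact absurd ((f3 a ha ▸ f1 b hb ▸ hab).symm ▸ hmem _) hw'Vq
    · exact absurd ((f3 a ha ▸ f2 b hb ▸ hab).symm ▸ hmem _) hwVq
    · rw [f3 a ha, f3 b hb] at hab
      have := heminj hab
      simp only [Fin.mk.injEq] at this
      omega
  refine hfree ⟨⟨⟨f, finj⟩, ?_⟩⟩
  intro a b
  show G.Adj (f a) (f b) ↔ (tBroom t).Adj a b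
  have nwx : ¬ G.Adj w x := fun h => hxw (G.adj_symm h)
  have nemw' : ∀ i, ¬ G.Adj (em i) w' := fun i h => hw'q _ (hmem i) (G.adj_symm h)
  have nemw : ∀ i, ¬ G.Adj (em i) w := fun i h => hwq _ (hmem i) (G.adj_symm h)
  rw [tadj]
  rcases hval a with ha|ha|ha|ha <;> rcases hval b with hb|hb|hb|hb
  · rw [f0 a ha, f0 b hb]; simp [ha, hb]
  · rw [f0 a ha, f1 b hb]; simp [ha, hb, hxw']
  · rw [f0 a ha, f2 b hb]; simp [ha, hb, hxw]
  · rw [f0 a ha, f3 b hb]; simp [ha, hxq _ (hmem _)]; omega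
  · rw [f1 a ha, f0 b hb]; simp [ha, hb, hxw'.symm]
  · rw [f1 a ha, f1 b hb]; simp [ha, hb]
  · rw [f1 a ha, f2 b hb]; simp [ha, hb, hww']
  · rw [f1 a ha, f3 b hb]; simp [ha, hw'q _ (hmem _), G.adj_symm, -Fin.val_eq_zero_iff]; omega
  · rw [f2 a ha, f0 b hb]; simp [ha, hb, nwx]
  · rw [f2 a ha, f1 b hb]; simp [ha, hb, hww'.symm]
  · rw [f2 a ha, f2 b hb]; simp [ha, hb]
  · rw [f2 a ha, f3 b hb]; simp [ha, hwq _ (hmem _), G.adj_symm]; omega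
  · rw [f3 a ha, f0 b hb]; simp [hb, (hxq _ (hmem _)).symm, -Fin.val_eq_zero_iff]; omega
  · rw [f3 a ha, f1 b hb]; simp [hb, nemw' _, -Fin.val_eq_zero_iff]; omega
  · rw [f3 a ha, f2 b hb]; simp [hb, nemw _]; omega
  · rw [f3 a ha, f3 b hb]; simp [hindepq _ (hmem _) _ (hmem _), -Fin.val_eq_zero_iff]; omega

/-- Lemma 2.2(i). With `Q = G[V_1 ∪ ⋯ ∪ V_q]` complete `q`-partite,
`|V_q| = t`, and `W = {v ∈ N(V(Q)) : v anticomplete to V_q}`, the sets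
`W_I` and `W_{I'}` are anticomplete to each other for distinct `I, I' ⊆ V_1 ∪ ⋯ ∪ V_{q-1}`. -/
theorem Wparts_anticomplete (t q : ℕ) (ht : 2 ≤ t) (hq : 2 ≤ q)
    (V : Type) [Fintype V] (G : SimpleGraph V) (hfree : _root_.Free G (tBroom t))
    (Vs : Fin (q - 1) → Set V) (Vq : Set V)
    (hne : ∀ i, (Vs i).Nonempty) (hVq : Vq.ncard = t)
    (hdisj : ∀ i j, i ≠ j → Disjoint (Vs i) (Vs j))
    (hdisjq : ∀ i, Disjoint (Vs i) Vq)
    (hindep : ∀ i, ∀ u ∈ Vs i, ∀ w ∈ Vs i, ¬ G.Adj u w)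
    (hindepq : ∀ u ∈ Vq, ∀ w ∈ Vq, ¬ G.Adj u w)
    (hcomp : ∀ i j, i ≠ j → ∀ u ∈ Vs i, ∀ w ∈ Vs j, G.Adj u w)
    (hcompq : ∀ i, ∀ u ∈ Vs i, ∀ w ∈ Vq, G.Adj u w) :
    ∀ I I' : Set V, I ⊆ (⋃ i, Vs i) → I' ⊆ (⋃ i, Vs i) → I ≠ I' →
      ∀ w ∈ Wpart G (⋃ i, Vs i) Vq I, ∀ w' ∈ Wpart G (⋃ i, Vs i) Vq I',
        ¬ G.Adj w w' := by
  intro I I' hI hI' hne' w hw w' hw' hadj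
  obtain ⟨⟨hwU, -⟩, hwaVq, hwcI, hwaU⟩ := hw
  obtain ⟨⟨hw'U, -⟩, hw'aVq, hw'cI, hw'aU⟩ := hw'
  have hwVq : w ∉ Vq := fun h => hwU (Or.inr h)
  have hw'Vq : w' ∉ Vq := fun h => hw'U (Or.inr h)
  have hx : ∃ x, (x ∈ I ∧ x ∉ I') ∨ (x ∈ I' ∧ x ∉ I) := by
    by_contra h
    push_neg at h
    exact hne' (Set.ext fun z => by have := h z; tauto)
  obtain ⟨x, hx⟩ := hx
  rcases hx with ⟨hxI, hxnI'⟩ | ⟨hxI', hxnI⟩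
  · obtain ⟨i, hxi⟩ := Set.mem_iUnion.mp (hI hxI)
    exact broom_aux t ht G hfree Vq hVq hindepq x w' w
      (fun h => Set.disjoint_left.mp (hdisjq i) hxi h)
      (fun h => hw'U (Or.inr h)) (fun h => hwU (Or.inr h))
      (fun u hu => hcompq i x hxi u hu) hw'aVq hwaVq
      ((hwcI x hxI).symm) hadj
      (fun h => hw'aU x ⟨Set.mem_iUnion.mpr ⟨i, hxi⟩, hxnI'⟩ h.symm)
  · obtain ⟨i, hxi⟩ := Set.mem_iUnion.mp (hI' hxI')
    exact broom_aux t ht G hfree Vq hVq hindepq x w w'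
      (fun h => Set.disjoint_left.mp (hdisjq i) hxi h)
      (fun h => hwU (Or.inr h)) (fun h => hw'U (Or.inr h))
      (fun u hu => hcompq i x hxi u hu) hwaVq hw'aVq
      ((hw'cI x hxI').symm) hadj.symm
      (fun h => hwaU x ⟨Set.mem_iUnion.mpr ⟨i, hxi⟩, hxnI⟩ h.symm)
end

section
/- Let t ≥ 2 and q ≥ 2 be integers, let G be a finite t-broom-free graph, and let V_1, …, V_q be pairwise disjoint independent sets in G with |V_i| = 1 for i ∈ [q-1] and |V_q| = t, such that Q := G[V_1 ∪ ⋯ ∪ V_q] is a complete q-partite graph with parts V_1, …, V_q. Suppose moreover that q is maximum with this property: there do not exist pairwise disjoint independent sets V'_1, …, V'_{q+1} in G with |V'_i| = 1 for i ∈ [q] and |V'_{q+1}| = t such that G[V'_1 ∪ ⋯ ∪ V'_{q+1}] is a complete (q+1)-partite graph with parts V'_1, …, V'_{q+1}. Let B = {v ∈ N(V(Q)) : v is complete to V(Q) \ V_q}. If R is a positive integer with the Ramsey property for (t, ω(G)), then every vertex of B has fewer than R neighbors in B; that is, Δ(G[B]) < R. -/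
open SimpleGraph

/-- Lemma 2.3. Let `Q` be complete `q`-partite with parts
`V_1 = {v 1}, …, V_{q-1} = {v (q-1)}` singletons and `|V_q| = t`, with `q` maximum.
If `B = {x ∈ N(V(Q)) : x complete to V(Q) \ V_q}` and `R` has the Ramsey property for
`(t, ω(G))`, then every vertex of `B` has fewer than `R` neighbors in `B`. -/
theorem maxDegree_B_lt (t q : ℕ) (ht : 2 ≤ t) (hq : 2 ≤ q)
    (V : Type) [Fintype V] (G : SimpleGraph V) (hfree : _root_.Free G (tBroom t))
    (v : Fin (q - 1) → V) (Vq : Set V)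
    (hinj : Function.Injective v) (hVq : Vq.ncard = t)
    (hdisjq : ∀ i, v i ∉ Vq)
    (hindepq : ∀ u ∈ Vq, ∀ w ∈ Vq, ¬ G.Adj u w)
    (hcomp : ∀ i j, i ≠ j → G.Adj (v i) (v j))
    (hcompq : ∀ i, ∀ w ∈ Vq, G.Adj (v i) w)
    (hmax : ¬ ∃ (v' : Fin q → V) (Vq' : Set V),
        Function.Injective v' ∧ Vq'.ncard = t ∧ (∀ i, v' i ∉ Vq') ∧
        (∀ u ∈ Vq', ∀ w ∈ Vq', ¬ G.Adj u w) ∧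
        (∀ i j, i ≠ j → G.Adj (v' i) (v' j)) ∧
        (∀ i, ∀ w ∈ Vq', G.Adj (v' i) w))
    (R : ℕ) (hR : 0 < R) (hRam : RamseyProp R t G.cliqueNum) :
    ∀ x ∈ {y ∈ nbhd G (Set.range v ∪ Vq) |
             CompleteTo G y ((Set.range v ∪ Vq) \ Vq)},
      ({y ∈ {z ∈ nbhd G (Set.range v ∪ Vq) |
               CompleteTo G z ((Set.range v ∪ Vq) \ Vq)} | G.Adj x y}).ncard < R := by
  
  classical
  intro x hx
  by_contra hcon
  push_neg at hcon
  obtain ⟨⟨hxnot, -⟩, hxc⟩ := hx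
  have hrange : (Set.range v ∪ Vq) \ Vq = Set.range v := by
    rw [Set.union_diff_right]
    ext a
    constructor
    · exact fun h => h.1
    · rintro ⟨i, rfl⟩
      exact ⟨⟨i, rfl⟩, hdisjq i⟩
  rw [hrange] at hxc
  set B : Set V := {y ∈ nbhd G (Set.range v ∪ Vq) |
      CompleteTo G y ((Set.range v ∪ Vq) \ Vq)} with hBdef
  set D : Set V := {y ∈ B | G.Adj x y} with hDdef
  -- basic facts about members of D
  have hDfacts : ∀ y ∈ D, y ∉ Set.range v ∪ Vq ∧ (∀ i, G.Adj y (v i)) ∧ G.Adj x y := by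
    rintro y ⟨⟨⟨hy1, -⟩, hy2⟩, hy3⟩
    rw [hrange] at hy2
    exact ⟨hy1, fun i => hy2 (v i) ⟨i, rfl⟩, hy3⟩
  haveI : Fintype ↥D := (Set.toFinite D).fintype
  have hcard : R ≤ Fintype.card ↥D := by
    rw [← Nat.card_eq_fintype_card, Nat.card_coe_set_eq D]
    exact hcon
  rcases hRam ↥D (G.induce D) hcard with ⟨S, hScard, hSindep⟩ | ⟨S, hSclique, hScard⟩
  · -- independent set case: contradicts maximality
    apply hmax
    have hxr : x ∉ Set.range v := fun hr => hxnot (Or.inl hr)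
    refine ⟨fun i => if h : (i : ℕ) < q - 1 then v ⟨i, h⟩ else x,
      ↑(S.image Subtype.val), ?_, ?_, ?_, ?_, ?_, ?_⟩
    · intro i j hij
      by_cases hi : (i : ℕ) < q - 1 <;> by_cases hj : (j : ℕ) < q - 1 <;>
        simp only [hi, hj, dif_pos, dif_neg, not_false_eq_true] at hij
      · exact Fin.ext (show (i : ℕ) = j by simpa using hinj hij)
      · exact absurd ⟨_, hij⟩ hxr
      · exact absurd ⟨_, hij.symm⟩ hxr
      · exact Fin.ext (by omega)
    · rw [Set.ncard_coe_finset, Finset.card_image_of_injective _ Subtype.val_injective,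
        hScard]
    · intro i hmem
      simp only [Finset.coe_image, Set.mem_image, Finset.mem_coe] at hmem
      obtain ⟨a, haS, ha⟩ := hmem
      obtain ⟨hnot, -, hadj⟩ := hDfacts a a.2
      by_cases hi : (i : ℕ) < q - 1
      · rw [dif_pos hi] at ha
        exact hnot (Or.inl ⟨_, ha.symm⟩)
      · rw [dif_neg hi] at ha
        exact G.ne_of_adj hadj (by rw [ha])
    · intro u hu w hw
      simp only [Finset.coe_image, Set.mem_image, Finset.mem_coe] at hu hw
      obtain ⟨a, haS, rfl⟩ := hu
      obtain ⟨b, hbS, rfl⟩ := hw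
      by_cases hab : a = b
      · subst hab; exact G.irrefl
      · exact hSindep a haS b hbS hab
    · intro i j hij
      have hadjx : ∀ k : Fin (q - 1), G.Adj x (v k) := fun k => hxc (v k) ⟨k, rfl⟩
      by_cases hi : (i : ℕ) < q - 1 <;> by_cases hj : (j : ℕ) < q - 1 <;>
        simp only [hi, hj, dif_pos, dif_neg, not_false_eq_true]
      · exact hcomp _ _ (fun h => hij (Fin.ext (show (i : ℕ) = j by simpa using h)))
      · exact (hadjx _).symm
      · exact hadjx _
      · exact absurd (Fin.ext (by omega : (i : ℕ) = j)) hij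
    · intro i w hw
      simp only [Finset.coe_image, Set.mem_image, Finset.mem_coe] at hw
      obtain ⟨a, haS, rfl⟩ := hw
      obtain ⟨-, hadjv, hadjx⟩ := hDfacts a a.2
      by_cases hi : (i : ℕ) < q - 1 <;>
        simp only [hi, dif_pos, dif_neg, not_false_eq_true]
      · exact (hadjv _).symm
      · exact hadjx
  · -- clique case: contradicts clique number
    have hxD : x ∉ (S.image Subtype.val : Finset V) := by
      simp only [Finset.mem_image]
      rintro ⟨a, haS, ha⟩
      exact G.ne_of_adj (hDfacts a a.2).2.2 ha.symm
    have hclique : G.IsClique (insert x (S.image Subtype.val) : Finset V) := by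
      intro u hu w hw huw
      simp only [Finset.coe_insert, Set.mem_insert_iff, Finset.coe_image,
        Set.mem_image, Finset.mem_coe] at hu hw
      rcases hu with rfl | ⟨a, haS, rfl⟩ <;> rcases hw with rfl | ⟨b, hbS, rfl⟩
      · exact absurd rfl huw
      · exact (hDfacts b b.2).2.2
      · exact ((hDfacts a a.2).2.2).symm
      · exact hSclique (by simpa using haS) (by simpa using hbS)
          (fun h => huw (congrArg Subtype.val h))
    have hle := SimpleGraph.IsClique.card_le_cliqueNum (tc := hclique)
    rw [Finset.card_insert_of_notMem hxD,
      Finset.card_image_of_injective _ Subtype.val_injective, hScard] at hle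
    omega
end

section
/- Let t ≥ 2 and q ≥ 2 be integers, let G be a finite t-broom-free graph, and let V_1, …, V_q be pairwise disjoint independent sets in G with |V_i| = 1 for i ∈ [q-1] and |V_q| = t, such that Q := G[V_1 ∪ ⋯ ∪ V_q] is a complete q-partite graph with parts V_1, …, V_q. Let A = {v ∈ N(V(Q)) : v is neutral to V_q and v is not complete to V(Q) \ V_q}. If R is a positive integer with the Ramsey property for (t, ω(G)), then |A| < t²·ω(G)·R. -/
open SimpleGraph

theorem broom_embed {V : Type} (G : SimpleGraph V) {t : ℕ} (ht : 2 ≤ t)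
    (u0 w1 w2 : V) (x : Fin t → V)
    (hxinj : Function.Injective x)
    (hx0 : ∀ j, u0 ≠ x j) (hx1 : ∀ j, w1 ≠ x j) (hx2 : ∀ j, w2 ≠ x j)
    (hne02 : u0 ≠ w2)
    (h01 : G.Adj u0 w1) (h12 : G.Adj w1 w2) (h02 : ¬ G.Adj u0 w2)
    (hleaf : ∀ j, G.Adj u0 (x j))
    (h1x : ∀ j, ¬ G.Adj w1 (x j)) (h2x : ∀ j, ¬ G.Adj w2 (x j))
    (hxx : ∀ j k, j ≠ k → ¬ G.Adj (x j) (x k)) :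
    Nonempty (tBroom t ↪g G) := by
  have hlt : ∀ k : Fin (t + 3), k.val - 3 < t := fun k => by have := k.isLt; omega
  set f : Fin (t + 3) → V := fun k =>
    if k.val = 0 then u0 else if k.val = 1 then w1 else if k.val = 2 then w2
    else x ⟨k.val - 3, hlt k⟩ with hf
  have hf0 : ∀ k : Fin (t+3), k.val = 0 → f k = u0 := fun k h => by
    rw [hf]; dsimp only; rw [if_pos h]
  have hf1 : ∀ k : Fin (t+3), k.val = 1 → f k = w1 := fun k h => by
    rw [hf]; dsimp only; rw [if_neg (by omega), if_pos h]
  have hf2 : ∀ k : Fin (t+3), k.val = 2 → f k = w2 := fun k h => by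
    rw [hf]; dsimp only; rw [if_neg (by omega), if_neg (by omega), if_pos h]
  have hf3 : ∀ k : Fin (t+3), 3 ≤ k.val → f k = x ⟨k.val - 3, hlt k⟩ := fun k h => by
    have h0 : ¬ k.val = 0 := by omega
    have h1 : ¬ k.val = 1 := by omega
    have h2 : ¬ k.val = 2 := by omega
    rw [hf]; dsimp only; rw [if_neg h0, if_neg h1, if_neg h2]
  have hBr : ∀ p q : Fin (t+3), (tBroom t).Adj p q ↔ p.val ≠ q.val ∧
      ((p.val = 0 ∧ q.val = 1) ∨ (p.val = 1 ∧ q.val = 2) ∨ (p.val = 0 ∧ 3 ≤ q.val) ∨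
       (q.val = 0 ∧ p.val = 1) ∨ (q.val = 1 ∧ p.val = 2) ∨ (q.val = 0 ∧ 3 ≤ p.val)) := by
    intro p q
    rw [show tBroom t = SimpleGraph.fromRel (fun a b =>
      (a = 0 ∧ b = 1) ∨ (a = 1 ∧ b = 2) ∨ (a = 0 ∧ 3 ≤ b.val)) from rfl, fromRel_adj]
    have e0 : ∀ k : Fin (t+3), k = 0 ↔ k.val = 0 := fun k => by rw [Fin.ext_iff]; norm_num
    have e1 : ∀ k : Fin (t+3), k = 1 ↔ k.val = 1 := fun k => by rw [Fin.ext_iff]; norm_num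
    have e2 : ∀ k : Fin (t+3), k = 2 ↔ k.val = 2 := fun k => by
      rw [Fin.ext_iff]; norm_num; rw [Nat.mod_eq_of_lt (by omega : 2 < t + 3)]
    simp only [ne_eq, Fin.ext_iff, e0, e1, e2]
    tauto
  have hinj : Function.Injective f := by
    intro p q h
    have hp4 : p.val = 0 ∨ p.val = 1 ∨ p.val = 2 ∨ 3 ≤ p.val := by omega
    have hq4 : q.val = 0 ∨ q.val = 1 ∨ q.val = 2 ∨ 3 ≤ q.val := by omega
    apply Fin.ext
    rcases hp4 with hp|hp|hp|hp <;> rcases hq4 with hq|hq|hq|hq <;>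
      (first | rw [hf0 _ hp] at h | rw [hf1 _ hp] at h | rw [hf2 _ hp] at h | rw [hf3 _ hp] at h) <;>
      (first | rw [hf0 _ hq] at h | rw [hf1 _ hq] at h | rw [hf2 _ hq] at h | rw [hf3 _ hq] at h)
    · omega
    · exact absurd h h01.ne
    · exact absurd h hne02
    · exact absurd h (hx0 _)
    · exact absurd h.symm h01.ne
    · omega
    · exact absurd h h12.ne
    · exact absurd h (hx1 _)
    · exact absurd h.symm hne02
    · exact absurd h.symm h12.ne
    · omega
    · exact absurd h (hx2 _)
    · exact absurd h.symm (hx0 _)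
    · exact absurd h.symm (hx1 _)
    · exact absurd h.symm (hx2 _)
    · have := hxinj h
      rw [Fin.mk.injEq] at this
      omega
  refine ⟨⟨⟨f, hinj⟩, ?_⟩⟩
  intro p q
  show G.Adj (f p) (f q) ↔ _
  rw [hBr]
  have hp4 : p.val = 0 ∨ p.val = 1 ∨ p.val = 2 ∨ 3 ≤ p.val := by omega
  have hq4 : q.val = 0 ∨ q.val = 1 ∨ q.val = 2 ∨ 3 ≤ q.val := by omega
  rcases hp4 with hp|hp|hp|hp <;> rcases hq4 with hq|hq|hq|hq <;>
    (first | rw [hf0 _ hp] | rw [hf1 _ hp] | rw [hf2 _ hp] | rw [hf3 _ hp]) <;>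
    (first | rw [hf0 _ hq] | rw [hf1 _ hq] | rw [hf2 _ hq] | rw [hf3 _ hq])
  · constructor
    · intro h; exact absurd rfl h.ne
    · omega
  · constructor
    · intro _; omega
    · intro _; exact h01
  · constructor
    · intro h; exact absurd h h02
    · omega
  · constructor
    · intro _; omega
    · intro _; exact hleaf _
  · constructor
    · intro _; omega
    · intro _; exact h01.symm
  · constructor
    · intro h; exact absurd rfl h.ne
    · omega
  · constructor
    · intro _; omega
    · intro _; exact h12
  · constructor
    · intro h; exact absurd h (h1x _)
    · omega
  · constructor
    · intro h; exact absurd h.symm h02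
    · omega
  · constructor
    · intro _; omega
    · intro _; exact h12.symm
  · constructor
    · intro h; exact absurd rfl h.ne
    · omega
  · constructor
    · intro h; exact absurd h (h2x _)
    · omega
  · constructor
    · intro _; omega
    · intro _; exact (hleaf _).symm
  · constructor
    · intro h; exact absurd h.symm (h1x _)
    · omega
  · constructor
    · intro h; exact absurd h.symm (h2x _)
    · omega
  · constructor
    · intro h
      by_cases hpq : p.val = q.val
      · exfalso
        have : (⟨p.val - 3, hlt p⟩ : Fin t) = ⟨q.val - 3, hlt q⟩ := by
          apply Fin.ext; simp; omega
        rw [this] at h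
        exact absurd rfl h.ne
      · exfalso
        refine hxx ⟨p.val - 3, hlt p⟩ ⟨q.val - 3, hlt q⟩ ?_ h
        intro hc; rw [Fin.mk.injEq] at hc; omega
    · omega

/-- Lemma 2.4. Let `Q` be complete `q`-partite with parts
`V_1, …, V_{q-1}` singletons and `|V_q| = t`.  If
`A = {x ∈ N(V(Q)) : x neutral to V_q and not complete to V(Q) \ V_q}` and `R` has the
Ramsey property for `(t, ω(G))`, then `|A| < t² ω(G) R`. -/
theorem card_A_lt (t q : ℕ) (ht : 2 ≤ t) (hq : 2 ≤ q)
    (V : Type) [Fintype V] (G : SimpleGraph V) (hfree : _root_.Free G (tBroom t))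
    (v : Fin (q - 1) → V) (Vq : Set V)
    (hinj : Function.Injective v) (hVq : Vq.ncard = t)
    (hdisjq : ∀ i, v i ∉ Vq)
    (hindepq : ∀ u ∈ Vq, ∀ w ∈ Vq, ¬ G.Adj u w)
    (hcomp : ∀ i j, i ≠ j → G.Adj (v i) (v j))
    (hcompq : ∀ i, ∀ w ∈ Vq, G.Adj (v i) w)
    (R : ℕ) (hR : 0 < R) (hRam : RamseyProp R t G.cliqueNum) :
    ({x ∈ nbhd G (Set.range v ∪ Vq) | NeutralTo G x Vq ∧
        ¬ CompleteTo G x ((Set.range v ∪ Vq) \ Vq)}).ncard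
      < t ^ 2 * G.cliqueNum * R := by
  classical
  set ω := G.cliqueNum with hωdef
  set A : Set V := {x ∈ nbhd G (Set.range v ∪ Vq) | NeutralTo G x Vq ∧
        ¬ CompleteTo G x ((Set.range v ∪ Vq) \ Vq)} with hA
  -- basic facts about members of A
  have hAfacts : ∀ x ∈ A, x ∉ Set.range v ∪ Vq ∧ (∃ a ∈ Vq, G.Adj x a) ∧
      (∃ b ∈ Vq, ¬ G.Adj x b) ∧ (∃ i, ¬ G.Adj x (v i)) := by
    intro x hx
    rw [hA] at hx
    obtain ⟨hnb, ⟨hnc, hna⟩, hncs⟩ := hx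
    obtain ⟨hxout, -⟩ := hnb
    refine ⟨hxout, ?_, ?_, ?_⟩
    · by_contra hcon
      push_neg at hcon
      exact hna fun u hu => hcon u hu
    · simp only [CompleteTo] at hnc
      push_neg at hnc
      exact hnc
    · simp only [CompleteTo] at hncs
      push_neg at hncs
      obtain ⟨u, hu, hnadj⟩ := hncs
      rcases hu.1 with ⟨i, rfl⟩ | huq
      · exact ⟨i, hnadj⟩
      · exact absurd huq hu.2
  -- clique number facts
  have hcl : ∀ s : Finset V, G.IsClique ↑s → s.card ≤ ω :=
    fun s hs => IsClique.card_le_cliqueNum (tc := hs)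
  have hVqfin : Vq.Finite := Set.toFinite Vq
  have hVqne : Vq.Nonempty := by
    rw [← Set.ncard_pos hVqfin]; omega
  obtain ⟨a0, ha0⟩ := hVqne
  have hω1 : 1 ≤ ω := by
    have h1 : G.IsClique (↑({a0} : Finset V)) := by
      intro u hu w hw hne
      simp only [Finset.coe_singleton, Set.mem_singleton_iff] at hu hw
      exact absurd (hu.trans hw.symm) hne
    simpa using hcl {a0} h1
  -- the key Ramsey-based bound
  have hB : ∀ a ∈ Vq, ∀ b ∈ Vq, a ≠ b → ∀ i : Fin (q-1), ∀ B : Finset V,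
      (∀ x ∈ B, x ∈ A ∧ G.Adj x a ∧ ¬ G.Adj x b ∧ ¬ G.Adj x (v i)) → B.card < R := by
    intro a ha b hb hab i B hBm
    by_contra hge
    push_neg at hge
    have hcard : R ≤ Fintype.card {y // y ∈ B} := by rwa [Fintype.card_coe]
    rcases hRam {y // y ∈ B} (SimpleGraph.comap (fun y : {y // y ∈ B} => (y : V)) G) hcard with
      ⟨S, hScard, hSind⟩ | ⟨S, hScl⟩
    · -- independent set of size t: build a broom
      have e := S.equivFinOfCardEq hScard
      set xf : Fin t → V := fun j => ((e.symm j : {y // y ∈ B}) : V) with hxf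
      have hxmem : ∀ j, xf j ∈ B := fun j => (e.symm j : {y // y ∈ B}).2
      have hxfacts : ∀ j, xf j ∈ A ∧ G.Adj (xf j) a ∧ ¬ G.Adj (xf j) b ∧ ¬ G.Adj (xf j) (v i) :=
        fun j => hBm _ (hxmem j)
      have hxout : ∀ j, xf j ∉ Set.range v ∪ Vq := fun j => (hAfacts _ (hxfacts j).1).1
      have hxinj' : Function.Injective xf := by
        intro j k h
        apply e.symm.injective
        exact Subtype.ext (Subtype.ext h)
      have hxadj : ∀ j k, j ≠ k → ¬ G.Adj (xf j) (xf k) := by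
        intro j k hjk hadj
        refine hSind (e.symm j) (e.symm j).2 (e.symm k) (e.symm k).2 ?_ hadj
        intro hc
        exact hjk (e.symm.injective (Subtype.ext hc))
      refine hfree (broom_embed G ht a (v i) b xf hxinj' ?_ ?_ ?_ hab
        (hcompq i a ha).symm (hcompq i b hb) (hindepq a ha b hb) ?_ ?_ ?_ hxadj)
      · exact fun j h => hxout j (h ▸ Or.inr ha)
      · exact fun j h => hxout j (h ▸ Or.inl ⟨i, rfl⟩)
      · exact fun j h => hxout j (h ▸ Or.inr hb)
      · exact fun j => ((hxfacts j).2.1).symm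
      · exact fun j h => (hxfacts j).2.2.2 h.symm
      · exact fun j h => (hxfacts j).2.2.1 h.symm
    · -- clique of size ω: together with a it is too big
      set C : Finset V := S.image (fun z => z.1) with hC
      have hvalinj : Function.Injective (fun z : {y // y ∈ B} => z.1) :=
        fun z z' h => Subtype.ext h
      have hCcard : C.card = ω := by
        rw [hC, Finset.card_image_of_injective _ hvalinj, hScl.2]
      have hCsub : ∀ c ∈ C, c ∈ B := by
        intro c hc
        obtain ⟨z, _, rfl⟩ := Finset.mem_image.mp hc
        exact z.2
      have haC : a ∉ C := by
        intro hc
        exact (hAfacts _ (hBm _ (hCsub _ hc)).1).1 (Or.inr ha)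
      have hclq : G.IsClique (↑(insert a C) : Set V) := by
        intro u hu w hw hne
        simp only [Finset.coe_insert, Set.mem_insert_iff, Finset.mem_coe] at hu hw
        rcases hu with rfl | hu <;> rcases hw with rfl | hw
        · exact absurd rfl hne
        · exact ((hBm _ (hCsub _ hw)).2.1).symm
        · exact (hBm _ (hCsub _ hu)).2.1
        · obtain ⟨z, hz, rfl⟩ := Finset.mem_image.mp hu
          obtain ⟨z', hz', rfl⟩ := Finset.mem_image.mp hw
          have hzz : z ≠ z' := fun h => hne (congrArg Subtype.val h)
          exact hScl.1 hz hz' hzz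
      have := hcl _ hclq
      rw [Finset.card_insert_of_notMem haC, hCcard] at this
      omega
  -- the greedy induction
  have hKey : ∀ n : ℕ, ∀ a ∈ Vq, ∀ b ∈ Vq, a ≠ b → ∀ (K : Finset (Fin (q-1))) (S : Finset V),
      S.card ≤ n →
      (∀ x ∈ S, x ∈ A ∧ G.Adj x a ∧ ¬ G.Adj x b ∧ ∀ j ∈ K, G.Adj x (v j)) →
      S.card ≤ (ω - 1 - K.card) * (R - 1) := by
    intro n
    induction n with
    | zero =>
      intro a ha b hb hab K S hScard _
      omega
    | succ n ih =>
      intro a ha b hb hab K S hScard hSm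
      rcases S.eq_empty_or_nonempty with rfl | ⟨x, hx⟩
      · simp
      obtain ⟨hxA, hxa, hxb, hxK⟩ := hSm x hx
      obtain ⟨i, hi⟩ := (hAfacts x hxA).2.2.2
      have hxoutA : x ∉ Set.range v ∪ Vq := (hAfacts x hxA).1
      have hiK : i ∉ K := fun hiK => hi (hxK i hiK)
      -- K.card + 2 ≤ ω
      have hKcl : K.card + 2 ≤ ω := by
        have hclq : G.IsClique (↑(insert x (insert a (K.image v))) : Set V) := by
          intro u hu w hw hne
          simp only [Finset.coe_insert, Set.mem_insert_iff, Finset.coe_image,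
            Set.mem_image, Finset.mem_coe] at hu hw
          rcases hu with rfl | heu | ⟨j, hj, rfl⟩ <;> rcases hw with rfl | hew | ⟨j', hj', rfl⟩
          · exact absurd rfl hne
          · rw [hew]; exact hxa
          · exact hxK j' hj'
          · rw [heu]; exact hxa.symm
          · rw [heu, hew] at hne; exact absurd rfl hne
          · rw [heu]; exact (hcompq j' a ha).symm
          · exact (hxK j hj).symm
          · rw [hew]; exact hcompq j a ha
          · exact hcomp j j' (fun h => hne (congrArg v h))
        have hximg : x ∉ insert a (K.image v) := by
          intro hc
          rcases Finset.mem_insert.mp hc with rfl | hc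
          · exact hxoutA (Or.inr ha)
          · obtain ⟨j, _, rfl⟩ := Finset.mem_image.mp hc
            exact hxoutA (Or.inl ⟨j, rfl⟩)
        have haimg : a ∉ K.image v := by
          intro hc
          obtain ⟨j, _, rfl⟩ := Finset.mem_image.mp hc
          exact hdisjq j ha
        have := hcl _ hclq
        rw [Finset.card_insert_of_notMem hximg, Finset.card_insert_of_notMem haimg,
          Finset.card_image_of_injective _ hinj] at this
        omega
      set B := S.filter (fun y => ¬ G.Adj y (v i)) with hBdef
      set S' := S.filter (fun y => G.Adj y (v i)) with hS'def
      have hBcard : B.card < R := by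
        refine hB a ha b hb hab i B (fun y hy => ?_)
        obtain ⟨hyS, hyn⟩ := Finset.mem_filter.mp hy
        obtain ⟨h1, h2, h3, _⟩ := hSm y hyS
        exact ⟨h1, h2, h3, hyn⟩
      have hxB : x ∈ B := Finset.mem_filter.mpr ⟨hx, hi⟩
      have hsplit : B.card + S'.card = S.card := by
        rw [hBdef, hS'def]
        rw [Finset.filter_not]
        exact Finset.card_sdiff_add_card_eq_card (Finset.filter_subset _ _)
      have hBpos : 1 ≤ B.card := Finset.card_pos.mpr ⟨x, hxB⟩
      have hS'le : S'.card ≤ n := by omega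
      have hIH : S'.card ≤ (ω - 1 - (K.card + 1)) * (R - 1) := by
        have := ih a ha b hb hab (insert i K) S' hS'le (fun y hy => ?_)
        · rwa [Finset.card_insert_of_notMem hiK] at this
        · obtain ⟨hyS, hyadj⟩ := Finset.mem_filter.mp hy
          obtain ⟨h1, h2, h3, h4⟩ := hSm y hyS
          refine ⟨h1, h2, h3, fun j hj => ?_⟩
          rcases Finset.mem_insert.mp hj with rfl | hj
          · exact hyadj
          · exact h4 j hj
      have heq : (ω - 1 - K.card) * (R - 1) = (ω - 1 - (K.card + 1)) * (R - 1) + (R - 1) := by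
        have h' : (ω - 1 - K.card) = (ω - 1 - (K.card + 1)) + 1 := by omega
        rw [h', add_mul, one_mul]
      omega
  -- assemble
  have hAfin : A.Finite := Set.toFinite A
  set Af := hAfin.toFinset with hAf
  set Qf := hVqfin.toFinset with hQf
  have hQcard : Qf.card = t := by
    rw [hQf, ← Set.ncard_eq_toFinset_card _ hVqfin]
    exact hVq
  have hsub : Af ⊆ (Qf ×ˢ Qf).biUnion
      (fun p => Af.filter (fun x => G.Adj x p.1 ∧ ¬ G.Adj x p.2)) := by
    intro x hxf
    have hxA : x ∈ A := hAfin.mem_toFinset.mp hxf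
    obtain ⟨-, ⟨a, ha, hadj⟩, ⟨b, hb, hnadj⟩, -⟩ := hAfacts x hxA
    exact Finset.mem_biUnion.mpr ⟨(a, b),
      Finset.mem_product.mpr ⟨hVqfin.mem_toFinset.mpr ha, hVqfin.mem_toFinset.mpr hb⟩,
      Finset.mem_filter.mpr ⟨hxf, hadj, hnadj⟩⟩
  have hbound : ∀ p ∈ Qf ×ˢ Qf,
      (Af.filter (fun x => G.Adj x p.1 ∧ ¬ G.Adj x p.2)).card ≤ (ω - 1) * (R - 1) := by
    intro p hp
    obtain ⟨hp1, hp2⟩ := Finset.mem_product.mp hp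
    by_cases hab : p.1 = p.2
    · have : Af.filter (fun x => G.Adj x p.1 ∧ ¬ G.Adj x p.2) = ∅ := by
        refine Finset.filter_eq_empty_iff.mpr (fun x _ => ?_)
        rw [hab]
        tauto
      simp [this]
    · have := hKey Af.card p.1 (hVqfin.mem_toFinset.mp hp1) p.2 (hVqfin.mem_toFinset.mp hp2)
        hab ∅ (Af.filter (fun x => G.Adj x p.1 ∧ ¬ G.Adj x p.2))
        (Finset.card_filter_le _ _) (fun x hx => ?_)
      · simpa using this
      · obtain ⟨hxf, h1, h2⟩ := Finset.mem_filter.mp hx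
        exact ⟨hAfin.mem_toFinset.mp hxf, h1, h2, fun j hj => absurd hj (Finset.notMem_empty j)⟩
  have hAcard : Af.card ≤ t * t * ((ω - 1) * (R - 1)) := by
    calc Af.card ≤ ((Qf ×ˢ Qf).biUnion
        (fun p => Af.filter (fun x => G.Adj x p.1 ∧ ¬ G.Adj x p.2))).card :=
          Finset.card_le_card hsub
      _ ≤ ∑ p ∈ Qf ×ˢ Qf, (Af.filter (fun x => G.Adj x p.1 ∧ ¬ G.Adj x p.2)).card :=
          Finset.card_biUnion_le
      _ ≤ (Qf ×ˢ Qf).card • ((ω - 1) * (R - 1)) := Finset.sum_le_card_nsmul _ _ _ hbound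
      _ = t * t * ((ω - 1) * (R - 1)) := by
          rw [smul_eq_mul, Finset.card_product, hQcard]
  have hAncard : A.ncard = Af.card := Set.ncard_eq_toFinset_card A hAfin
  have hlt : (ω - 1) * (R - 1) < ω * R := by
    calc (ω - 1) * (R - 1) ≤ (ω - 1) * R := Nat.mul_le_mul_left _ (Nat.sub_le R 1)
      _ < ω * R := (Nat.mul_lt_mul_right hR).mpr (by omega)
  have hfinal : t * t * ((ω - 1) * (R - 1)) < t ^ 2 * ω * R := by
    have h2 : t ^ 2 * ω * R = t * t * (ω * R) := by ring
    rw [h2]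
    exact (Nat.mul_lt_mul_left (by positivity)).mpr hlt
  omega
end

section
/- Let q ≥ 2 be an integer, let G be a finite chair-free graph, and let V_1, …, V_q be pairwise disjoint independent sets in G with V_i = {v_i} for i ∈ [q-1] and V_q = {v_q, v_q'}, such that Q := G[V_1 ∪ ⋯ ∪ V_q] is a complete q-partite graph with parts V_1, …, V_q. Let A = {v ∈ N(V(Q)) : v is neutral to V_q and v is not complete to V(Q) \ V_q}. Then both G[A ∩ N(v_q)] and G[A ∩ N(v_q')] are perfect graphs; that is, every induced subgraph H of either of these graphs satisfies χ(H) = ω(H). -/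
set_option linter.unusedSectionVars false
set_option linter.unusedTactic false
set_option linter.unreachableTactic false
set_option maxHeartbeats 1000000


open SimpleGraph

lemma chair_free {V : Type} (G : SimpleGraph V) (hfree : _root_.Free G (tBroom 2))
    (u0 v1 v2 u1 u2 : V)
    (e1 : G.Adj u0 v1) (e2 : G.Adj v1 v2) (e3 : G.Adj u0 u1) (e4 : G.Adj u0 u2)
    (n1 : ¬ G.Adj u0 v2) (n2 : ¬ G.Adj v1 u1) (n3 : ¬ G.Adj v1 u2)
    (n4 : ¬ G.Adj v2 u1) (n5 : ¬ G.Adj v2 u2) (n6 : ¬ G.Adj u1 u2)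
    (d1 : u0 ≠ v2) (d2 : v1 ≠ u1) (d3 : v1 ≠ u2) (d4 : v2 ≠ u1) (d5 : v2 ≠ u2)
    (d6 : u1 ≠ u2) : False := by
  apply hfree
  refine ⟨⟨⟨![u0, v1, v2, u1, u2], ?_⟩, ?_⟩⟩
  · intro a b hab
    fin_cases a <;> fin_cases b <;> simp_all <;>
      first
        | rfl
        | exact absurd hab e1.ne
        | exact absurd hab e2.ne
        | exact absurd hab e3.ne
        | exact absurd hab e4.ne
        | exact absurd hab e1.ne'
        | exact absurd hab e2.ne'
        | exact absurd hab e3.ne'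
        | exact absurd hab e4.ne'
        | exact absurd hab d1 | exact absurd hab d2 | exact absurd hab d3
        | exact absurd hab d4 | exact absurd hab d5 | exact absurd hab d6
        | exact absurd hab d1.symm | exact absurd hab d2.symm
        | exact absurd hab d3.symm | exact absurd hab d4.symm
        | exact absurd hab d5.symm | exact absurd hab d6.symm
        | exact absurd hab (G.ne_of_adj e2)
  · intro a b
    fin_cases a <;> fin_cases b <;>
      simp [tBroom, fromRel_adj, e1, e2, e3, e4, n1, n2, n3, n4, n5, n6,
        e1.symm, e2.symm, e3.symm, e4.symm, G.irrefl] <;>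
      first
        | exact fun h => n1 h.symm
        | exact fun h => n2 h.symm
        | exact fun h => n3 h.symm
        | exact fun h => n4 h.symm
        | exact fun h => n5 h.symm
        | exact fun h => n6 h.symm
        | exact e1.symm | exact e2.symm | exact e3.symm | exact e4.symm
        | exact n1 | exact n2 | exact n3 | exact n4 | exact n5 | exact n6
        | exact e1 | exact e2 | exact e3 | exact e4
        | decide


section Glue
variable {V : Type} [Fintype V] (G : SimpleGraph V)


lemma clique_le_cliqueNum' (S : Set V) (X : Finset V) (hX : ↑X ⊆ S)
    (hadj : ∀ a ∈ X, ∀ b ∈ X, a ≠ b → G.Adj a b) :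
    X.card ≤ (G.induce S).cliqueNum := by
  classical
  haveI : Fintype ↥S := Fintype.ofFinite ↥S
  have hinj : Function.Injective (fun x : {x // x ∈ X} => (⟨x.1, hX x.2⟩ : ↥S)) := by
    intro a b hab
    have := congrArg Subtype.val hab
    exact Subtype.ext this
  set X' : Finset ↥S := X.attach.image (fun x => (⟨x.1, hX x.2⟩ : ↥S)) with hX'
  have hcard : X'.card = X.card := by
    rw [hX', Finset.card_image_of_injective _ hinj, Finset.card_attach]
  have hclique : (G.induce S).IsClique ↑X' := by
    intro a ha b hb hne
    simp only [hX', Finset.coe_image, Set.mem_image, Finset.mem_coe,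
      Finset.mem_attach, true_and] at ha hb
    obtain ⟨⟨a', ha'⟩, -, rfl⟩ := ha
    obtain ⟨⟨b', hb'⟩, -, rfl⟩ := hb
    have : a' ≠ b' := by
      intro h; apply hne; subst h; rfl
    exact hadj a' ha' b' hb' this
  calc X.card = X'.card := hcard.symm
    _ ≤ (G.induce S).cliqueNum := hclique.card_le_cliqueNum

lemma cliqueNum_mono (S1 S2 : Set V) (h : S1 ⊆ S2) :
    (G.induce S1).cliqueNum ≤ (G.induce S2).cliqueNum := by
  classical
  haveI : Fintype ↥S1 := Fintype.ofFinite ↥S1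
  obtain ⟨s, hs⟩ := (G.induce S1).exists_isNClique_cliqueNum
  have hXsub : ↑(s.image Subtype.val) ⊆ S2 := by
    intro a ha
    simp only [Finset.coe_image, Set.mem_image, Finset.mem_coe] at ha
    obtain ⟨a', -, rfl⟩ := ha
    exact h a'.2
  have hcard : (s.image Subtype.val).card = (G.induce S1).cliqueNum := by
    rw [Finset.card_image_of_injective _ Subtype.val_injective, hs.2]
  have hadj : ∀ a ∈ s.image Subtype.val, ∀ b ∈ s.image Subtype.val, a ≠ b → G.Adj a b := by
    intro a ha b hb hne
    simp only [Finset.mem_image] at ha hb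
    obtain ⟨a', ha', rfl⟩ := ha
    obtain ⟨b', hb', rfl⟩ := hb
    have hne' : a' ≠ b' := fun hh => hne (congrArg Subtype.val hh)
    exact hs.1 ha' hb' hne'
  calc (G.induce S1).cliqueNum = (s.image Subtype.val).card := hcard.symm
    _ ≤ (G.induce S2).cliqueNum := clique_le_cliqueNum' G S2 _ hXsub hadj

lemma colorable_split (S1 S : Set V) (N : ℕ)
    (hanti : ∀ u ∈ S1, ∀ w ∈ S \ S1, ¬G.Adj u w)
    (hc1 : (G.induce S1).Colorable N) (hc2 : (G.induce (S \ S1)).Colorable N) :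
    (G.induce S).Colorable N := by
  classical
  obtain ⟨C1⟩ := hc1
  obtain ⟨C2⟩ := hc2
  refine ⟨Coloring.mk
    (fun u => if h : u.1 ∈ S1 then C1 ⟨u.1, h⟩ else C2 ⟨u.1, ⟨u.2, h⟩⟩) ?_⟩
  intro u w hadj heq
  have hadj' : G.Adj u.1 w.1 := hadj
  by_cases hu : u.1 ∈ S1 <;> by_cases hw : w.1 ∈ S1
  · simp only [dif_pos hu, dif_pos hw] at heq
    exact C1.valid (show (G.induce S1).Adj ⟨u.1, hu⟩ ⟨w.1, hw⟩ from hadj') heq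
  · exact hanti u.1 hu w.1 ⟨w.2, hw⟩ hadj'
  · exact hanti w.1 hw u.1 ⟨u.2, hu⟩ hadj'.symm
  · simp only [dif_neg hu, dif_neg hw] at heq
    exact C2.valid (show (G.induce (S \ S1)).Adj ⟨u.1, ⟨u.2, hu⟩⟩ ⟨w.1, ⟨w.2, hw⟩⟩
      from hadj') heq

lemma colorable_join (S1 S : Set V) (n1 n2 : ℕ)
    (hc1 : (G.induce S1).Colorable n1) (hc2 : (G.induce (S \ S1)).Colorable n2) :
    (G.induce S).Colorable (n1 + n2) := by
  classical
  obtain ⟨C1⟩ := hc1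
  obtain ⟨C2⟩ := hc2
  have c : (G.induce S).Coloring (Fin n1 ⊕ Fin n2) := Coloring.mk
    (fun u => if h : u.1 ∈ S1 then Sum.inl (C1 ⟨u.1, h⟩) else Sum.inr (C2 ⟨u.1, ⟨u.2, h⟩⟩))
    (by
      intro u w hadj heq
      have hadj' : G.Adj u.1 w.1 := hadj
      by_cases hu : u.1 ∈ S1 <;> by_cases hw : w.1 ∈ S1
      · simp only [dif_pos hu, dif_pos hw] at heq
        exact C1.valid (show (G.induce S1).Adj ⟨u.1, hu⟩ ⟨w.1, hw⟩ from hadj')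
          (Sum.inl_injective heq)
      · simp only [dif_pos hu, dif_neg hw] at heq
        exact Sum.inl_ne_inr heq
      · simp only [dif_neg hu, dif_pos hw] at heq
        exact Sum.inr_ne_inl heq
      · simp only [dif_neg hu, dif_neg hw] at heq
        exact C2.valid (show (G.induce (S \ S1)).Adj ⟨u.1, ⟨u.2, hu⟩⟩ ⟨w.1, ⟨w.2, hw⟩⟩
          from hadj') (Sum.inr_injective heq))
  have h1 := c.colorable
  rwa [Fintype.card_sum, Fintype.card_fin, Fintype.card_fin] at h1

lemma cliqueNum_join_ge (S1 S : Set V) (hsub : S1 ⊆ S)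
    (hcomp : ∀ u ∈ S1, ∀ w ∈ S \ S1, G.Adj u w) :
    (G.induce S1).cliqueNum + (G.induce (S \ S1)).cliqueNum ≤ (G.induce S).cliqueNum := by
  classical
  haveI : Fintype ↥S1 := Fintype.ofFinite ↥S1
  haveI : Fintype ↥(S \ S1) := Fintype.ofFinite _
  obtain ⟨s1, hs1⟩ := (G.induce S1).exists_isNClique_cliqueNum
  obtain ⟨s2, hs2⟩ := (G.induce (S \ S1)).exists_isNClique_cliqueNum
  set X1 : Finset V := s1.image Subtype.val with hX1
  set X2 : Finset V := s2.image Subtype.val with hX2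
  have hm1 : ∀ a ∈ X1, a ∈ S1 := by
    intro a ha
    simp only [hX1, Finset.mem_image] at ha
    obtain ⟨a', -, rfl⟩ := ha
    exact a'.2
  have hm2 : ∀ a ∈ X2, a ∈ S \ S1 := by
    intro a ha
    simp only [hX2, Finset.mem_image] at ha
    obtain ⟨a', -, rfl⟩ := ha
    exact a'.2
  have hdisj : Disjoint X1 X2 := by
    rw [Finset.disjoint_left]
    intro a ha1 ha2
    exact (hm2 a ha2).2 (hm1 a ha1)
  have hcard : (X1 ∪ X2).card = (G.induce S1).cliqueNum + (G.induce (S \ S1)).cliqueNum := by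
    rw [Finset.card_union_of_disjoint hdisj, hX1, hX2,
      Finset.card_image_of_injective _ Subtype.val_injective,
      Finset.card_image_of_injective _ Subtype.val_injective, hs1.2, hs2.2]
  have hXsub : ↑(X1 ∪ X2) ⊆ S := by
    intro a ha
    simp only [Finset.coe_union, Set.mem_union, Finset.mem_coe] at ha
    rcases ha with ha | ha
    · exact hsub (hm1 a ha)
    · exact (hm2 a ha).1
  have hadj : ∀ a ∈ X1 ∪ X2, ∀ b ∈ X1 ∪ X2, a ≠ b → G.Adj a b := by
    intro a ha b hb hne
    rcases Finset.mem_union.1 ha with ha | ha <;> rcases Finset.mem_union.1 hb with hb | hb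
    · simp only [hX1, Finset.mem_image] at ha hb
      obtain ⟨a', ha', rfl⟩ := ha
      obtain ⟨b', hb', rfl⟩ := hb
      exact hs1.1 ha' hb' (fun hh => hne (congrArg Subtype.val hh))
    · exact hcomp a (hm1 a ha) b (hm2 b hb)
    · exact (hcomp b (hm1 b hb) a (hm2 a ha)).symm
    · simp only [hX2, Finset.mem_image] at ha hb
      obtain ⟨a', ha', rfl⟩ := ha
      obtain ⟨b', hb', rfl⟩ := hb
      exact hs2.1 ha' hb' (fun hh => hne (congrArg Subtype.val hh))
  calc (G.induce S1).cliqueNum + (G.induce (S \ S1)).cliqueNum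
      = (X1 ∪ X2).card := hcard.symm
    _ ≤ (G.induce S).cliqueNum := clique_le_cliqueNum' G S _ hXsub hadj


lemma koenig (S : Set V) (K1 K2 : Finset V)
    (hU : ↑K1 ∪ ↑K2 = S) (hdisj : Disjoint K1 K2)
    (h1 : ∀ a ∈ K1, ∀ b ∈ K1, a ≠ b → G.Adj a b)
    (h2 : ∀ a ∈ K2, ∀ b ∈ K2, a ≠ b → G.Adj a b) :
    (G.induce S).Colorable ((G.induce S).cliqueNum) := by
  classical
  set t : V → Finset V := fun a => K2.filter (fun b => ¬ G.Adj a b) with ht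
  set d : ℕ := K1.powerset.sup (fun A => A.card - (A.biUnion t).card) with hdd
  -- Hall condition
  set t' : {x // x ∈ K1} → Finset (V ⊕ Fin d) :=
    fun x => ((t x.1).image Sum.inl) ∪ (Finset.univ.image Sum.inr) with ht'
  have hall : ∀ (s : Finset {x // x ∈ K1}), s.card ≤ (s.biUnion t').card := by
    intro s
    rcases s.eq_empty_or_nonempty with rfl | hs
    · simp
    set A := s.image Subtype.val with hA
    have hAK : A ⊆ K1 := by
      intro a ha
      simp only [hA, Finset.mem_image] at ha
      obtain ⟨⟨a', ha'⟩, -, rfl⟩ := ha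
      exact ha'
    have hcA : A.card = s.card := Finset.card_image_of_injective _ Subtype.val_injective
    have hdle : A.card - (A.biUnion t).card ≤ d :=
      Finset.le_sup (f := fun A => A.card - (A.biUnion t).card) (Finset.mem_powerset.2 hAK)
    have hsub : (A.biUnion t).image Sum.inl ∪ (Finset.univ.image (Sum.inr : Fin d → V ⊕ Fin d))
        ⊆ s.biUnion t' := by
      intro y hy
      rcases Finset.mem_union.1 hy with hy | hy
      · simp only [Finset.mem_image, Finset.mem_biUnion] at hy ⊢
        obtain ⟨b, ⟨a, haA, hb⟩, rfl⟩ := hy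
        simp only [hA, Finset.mem_image] at haA
        obtain ⟨x, hx, rfl⟩ := haA
        exact ⟨x, hx, Finset.mem_union.2 (Or.inl (Finset.mem_image_of_mem _ hb))⟩
      · obtain ⟨x, hx⟩ := hs
        simp only [Finset.mem_biUnion]
        exact ⟨x, hx, Finset.mem_union.2 (Or.inr hy)⟩
    have hcard2 : (A.biUnion t).card + d ≤ (s.biUnion t').card := by
      have := Finset.card_le_card hsub
      rwa [Finset.card_union_of_disjoint (by
          simp only [Finset.disjoint_left, Finset.mem_image]
          rintro y ⟨b, -, rfl⟩ ⟨i, -, h⟩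
          exact Sum.inr_ne_inl h),
        Finset.card_image_of_injective _ Sum.inl_injective,
        Finset.card_image_of_injective _ Sum.inr_injective,
        Finset.card_univ, Fintype.card_fin] at this
    have : A.card ≤ (A.biUnion t).card + d := by omega
    omega
  obtain ⟨f, hfinj, hf⟩ :=
    (Finset.all_card_le_biUnion_card_iff_exists_injective t').1 hall

  -- the coloring
  set colOf : V → V ⊕ Fin d := fun u => if h : u ∈ K1 then f ⟨u, h⟩ else Sum.inl u with hcolOf
  set Y : Finset (V ⊕ Fin d) := K2.image Sum.inl ∪ Finset.univ.image Sum.inr with hY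
  have htK2 : ∀ a, t a ⊆ K2 := fun a => Finset.filter_subset _ _
  have hrange : ∀ u ∈ S, colOf u ∈ Y := by
    intro u hu
    by_cases h : u ∈ K1
    · have := hf ⟨u, h⟩
      simp only [hcolOf, dif_pos h]
      rcases Finset.mem_union.1 this with h' | h'
      · refine Finset.mem_union.2 (Or.inl ?_)
        obtain ⟨b, hb, he⟩ := Finset.mem_image.1 h'
        exact he ▸ Finset.mem_image_of_mem _ (htK2 _ hb)
      · exact Finset.mem_union.2 (Or.inr h')
    · have hu2 : u ∈ K2 := by
        rw [← hU] at hu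
        rcases hu with hu | hu
        · exact absurd hu h
        · exact hu
      simp only [hcolOf, dif_neg h]
      exact Finset.mem_union.2 (Or.inl (Finset.mem_image_of_mem _ hu2))
  have hproper : ∀ u ∈ S, ∀ w ∈ S, G.Adj u w → colOf u ≠ colOf w := by
    intro u _ w _ hadj heq
    by_cases h : u ∈ K1 <;> by_cases h' : w ∈ K1
    · simp only [hcolOf, dif_pos h, dif_pos h'] at heq
      have := hfinj heq
      exact hadj.ne (congrArg Subtype.val this)
    · simp only [hcolOf, dif_pos h, dif_neg h'] at heq
      have := hf ⟨u, h⟩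
      rw [heq] at this
      rcases Finset.mem_union.1 this with h2 | h2
      · obtain ⟨b, hb, he⟩ := Finset.mem_image.1 h2
        have : b = w := Sum.inl_injective he
        subst this
        exact (Finset.mem_filter.1 hb).2 hadj
      · obtain ⟨i, -, he⟩ := Finset.mem_image.1 h2
        exact Sum.inr_ne_inl he
    · simp only [hcolOf, dif_neg h, dif_pos h'] at heq
      have := hf ⟨w, h'⟩
      rw [← heq] at this
      rcases Finset.mem_union.1 this with h2 | h2
      · obtain ⟨b, hb, he⟩ := Finset.mem_image.1 h2
        have : b = u := Sum.inl_injective he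
        subst this
        exact (Finset.mem_filter.1 hb).2 hadj.symm
      · obtain ⟨i, -, he⟩ := Finset.mem_image.1 h2
        exact Sum.inr_ne_inl he
    · simp only [hcolOf, dif_neg h, dif_neg h'] at heq
      exact hadj.ne (Sum.inl_injective heq)
  haveI : Fintype ↥S := Fintype.ofFinite ↥S
  have hcolorable : (G.induce S).Colorable (K2.card + d) := by
    have c : (G.induce S).Coloring {y // y ∈ Y} :=
      Coloring.mk (fun u => ⟨colOf u.1, hrange u.1 u.2⟩)
        (by
          intro a b hab heq
          exact hproper a.1 a.2 b.1 b.2 hab (congrArg Subtype.val heq))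
    have h1 := c.colorable
    rw [Fintype.card_coe] at h1
    refine h1.mono ?_
    calc Y.card ≤ (K2.image (Sum.inl : V → V ⊕ Fin d)).card +
        (Finset.univ.image (Sum.inr : Fin d → V ⊕ Fin d)).card := Finset.card_union_le _ _
      _ = K2.card + d := by
          rw [Finset.card_image_of_injective _ Sum.inl_injective,
            Finset.card_image_of_injective _ Sum.inr_injective,
            Finset.card_univ, Fintype.card_fin]
  -- the clique: K2.card + d ≤ cliqueNum
  have hclique : K2.card + d ≤ (G.induce S).cliqueNum := by
    rcases Nat.eq_zero_or_pos d with hd0 | hdpos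
    · rw [hd0, Nat.add_zero]
      refine clique_le_cliqueNum' G S K2 ?_ h2
      rw [← hU]; exact Set.subset_union_right
    · obtain ⟨A, hApow, hAeq⟩ := Finset.exists_mem_eq_sup K1.powerset
        ⟨∅, Finset.empty_mem_powerset _⟩ (fun A => A.card - (A.biUnion t).card)
      have hAK : A ⊆ K1 := Finset.mem_powerset.1 hApow
      have hBK : A.biUnion t ⊆ K2 := by
        intro b hb
        obtain ⟨a, -, hb⟩ := Finset.mem_biUnion.1 hb
        exact htK2 a hb
      set X : Finset V := A ∪ (K2 \ A.biUnion t) with hX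
      have hdX : Disjoint A (K2 \ A.biUnion t) := by
        refine Finset.disjoint_left.2 ?_
        intro a ha ha2
        exact Finset.disjoint_left.1 hdisj (hAK ha) (Finset.mem_sdiff.1 ha2).1
      have hXcard : X.card = A.card + (K2.card - (A.biUnion t).card) := by
        rw [hX, Finset.card_union_of_disjoint hdX, Finset.card_sdiff_of_subset hBK]
      have hdval : d = A.card - (A.biUnion t).card := hAeq
      have hBA : (A.biUnion t).card < A.card := by omega
      have hBK2 : (A.biUnion t).card ≤ K2.card := Finset.card_le_card hBK
      have hXS : ↑X ⊆ S := by
        rw [← hU, hX]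
        intro x hx
        rcases Finset.mem_union.1 hx with hx | hx
        · exact Or.inl (hAK hx)
        · exact Or.inr (Finset.mem_sdiff.1 hx).1
      have hXadj : ∀ a ∈ X, ∀ b ∈ X, a ≠ b → G.Adj a b := by
        intro a ha b hb hne
        rcases Finset.mem_union.1 ha with ha | ha <;> rcases Finset.mem_union.1 hb with hb | hb
        · exact h1 a (hAK ha) b (hAK hb) hne
        · obtain ⟨hbK2, hbB⟩ := Finset.mem_sdiff.1 hb
          by_contra hnadj
          exact hbB (Finset.mem_biUnion.2 ⟨a, ha, Finset.mem_filter.2 ⟨hbK2, fun h => hnadj h⟩⟩)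
        · obtain ⟨haK2, haB⟩ := Finset.mem_sdiff.1 ha
          by_contra hnadj
          exact haB (Finset.mem_biUnion.2 ⟨b, hb, Finset.mem_filter.2 ⟨haK2,
            fun h => hnadj h.symm⟩⟩)
        · exact h2 a (Finset.mem_sdiff.1 ha).1 b (Finset.mem_sdiff.1 hb).1 hne
      have := clique_le_cliqueNum' G S X hXS hXadj
      omega
  exact hcolorable.mono hclique

end Glue



section ABS
variable {V : Type} {ι : Type} (G : SimpleGraph V) (S : Set V) (M : V → ι → Prop)

def PPc (G : SimpleGraph V) (S : Set V) (p q r a : V) : Prop :=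
  a ∈ S ∧ (a = p ∨ (G.Adj a p ∧ ¬G.Adj a q ∧ ¬G.Adj a r))

lemma PPc_swap {G : SimpleGraph V} {S : Set V} {p q r a : V} (h : PPc G S p q r a) :
    PPc G S p r q a := ⟨h.1, h.2.imp id (fun ⟨h1, h2, h3⟩ => ⟨h1, h3, h2⟩)⟩

variable
    (hNE : ∀ a ∈ S, ∃ i, M a i)
    (hL1 : ∀ a ∈ S, ∀ b ∈ S, a ≠ b → ¬G.Adj a b → ∀ i, M a i → M b i → False)
    (hL2 : ∀ a ∈ S, ∀ b ∈ S, ∀ c ∈ S, G.Adj a b → ¬G.Adj c a → ¬G.Adj c b →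
      c ≠ a → c ≠ b → ∀ i, M a i → M b i)

include hNE hL1 hL2 in
lemma hub : ∀ p ∈ S, ∀ q ∈ S, ∀ r ∈ S, ¬G.Adj p q → ¬G.Adj p r → ¬G.Adj q r →
    p ≠ q → p ≠ r → q ≠ r → ∀ a ∈ S, G.Adj a p → G.Adj a q → ¬G.Adj a r → False := by
  intro p hp q hq r hr npq npr nqr dpq dpr dqr a ha hap haq har
  obtain ⟨i, hi⟩ := hNE p hp
  have hra : r ≠ a := by
    intro h; subst h; exact npr hap.symm
  have h1 : M a i := hL2 p hp a ha r hr hap.symm (fun h => npr h.symm)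
    (fun h => har h.symm) (Ne.symm dpr) hra i hi
  have h2 : M q i := hL2 a ha q hq r hr haq (fun h => har h.symm)
    (fun h => nqr h.symm) hra (Ne.symm dqr) i h1
  exact hL1 p hp q hq dpq npq i hi h2

include hNE hL1 hL2 in
lemma cross : ∀ p ∈ S, ∀ q ∈ S, ∀ r ∈ S, ¬G.Adj p q → ¬G.Adj p r → ¬G.Adj q r →
    p ≠ q → p ≠ r → q ≠ r →
    ∀ a b, PPc G S p q r a → PPc G S q p r b → ¬G.Adj a b ∧ a ≠ b := by
  intro p hp q hq r hr npq npr nqr dpq dpr dqr a b hPPa hPPb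
  obtain ⟨ha, hPa⟩ := hPPa
  obtain ⟨hb, hPb⟩ := hPPb
  rcases hPa with heqa | ⟨hap, nap, nar⟩
  · rcases hPb with heqb | ⟨hbq, nbp, nbr⟩
    · exact ⟨by rw [heqa, heqb]; exact npq, by rw [heqa, heqb]; exact dpq⟩
    · refine ⟨?_, ?_⟩
      · rw [heqa]; exact fun h => nbp h.symm
      · rw [heqa]; intro h; rw [h] at npq; exact npq hbq
  · rcases hPb with heqb | ⟨hbq, nbp, nbr⟩
    · refine ⟨?_, ?_⟩
      · rw [heqb]; exact nap
      · rw [heqb]; intro h; rw [h] at hap; exact npq hap.symm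
    · have dab : a ≠ b := by
        intro h; rw [h] at hap; exact nbp hap
      refine ⟨?_, dab⟩
      intro hab
      obtain ⟨i, hi⟩ := hNE p hp
      have dqa : q ≠ a := fun h => npq (by rw [h]; exact hap.symm)
      have h1 : M a i := hL2 p hp a ha q hq hap.symm (fun h => npq h.symm)
        (fun h => nap h.symm) (Ne.symm dpq) dqa i hi
      have dra : r ≠ a := fun h => npr (by rw [h]; exact hap.symm)
      have drb : r ≠ b := fun h => nqr (by rw [h]; exact hbq.symm)
      have h2 : M b i := hL2 a ha b hb r hr hab (fun h => nar h.symm)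
        (fun h => nbr h.symm) dra drb i h1
      have h3 : M q i := hL2 b hb q hq r hr hbq (fun h => nbr h.symm)
        (fun h => nqr h.symm) drb (Ne.symm dqr) i h2
      exact hL1 p hp q hq dpq npq i hi h3

include hNE hL1 hL2 in
lemma ext1 : ∀ p ∈ S, ∀ q ∈ S, ∀ r ∈ S, ¬G.Adj p q → ¬G.Adj p r → ¬G.Adj q r →
    p ≠ q → p ≠ r → q ≠ r → ∀ h ∈ S, ¬ PPc G S p q r h →
    ∀ pp, PPc G S p q r pp → G.Adj h pp → G.Adj h p ∧ G.Adj h q ∧ G.Adj h r := by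
  classical
  intro p hp q hq r hr npq npr nqr dpq dpr dqr h hS nPh pp hPP hadj
  have hppS : pp ∈ S := hPP.1
  -- step (i) : Adj h q ∨ Adj h r
  have step1 : G.Adj h q ∨ G.Adj h r := by
    by_contra hcon
    push_neg at hcon
    obtain ⟨nhq, nhr⟩ := hcon
    apply nPh
    refine ⟨hS, ?_⟩
    by_cases hhp : h = p
    · exact Or.inl hhp
    refine Or.inr ⟨?_, nhq, nhr⟩
    rcases hPP.2 with heq | ⟨hpp_p, npp_q, npp_r⟩
    · rw [heq] at hadj; exact hadj
    · -- miss chain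
      obtain ⟨i, hi⟩ := hNE p hp
      have dqpp : q ≠ pp := fun hh => npq (by rw [hh]; exact hpp_p.symm)
      have h1 : M pp i := hL2 p hp pp hppS q hq hpp_p.symm (fun hh => npq hh.symm)
        (fun hh => npp_q hh.symm) (Ne.symm dpq) dqpp i hi
      have dqh : q ≠ h := fun hh => nhq (by rw [← hh] at hadj; exact (npp_q (hadj.symm)).elim)
      have h2 : M h i := hL2 pp hppS h hS q hq hadj.symm (fun hh => npp_q hh.symm)
        (fun hh => nhq hh.symm) dqpp dqh i h1
      by_contra nhp
      exact hL1 h hS p hp hhp nhp i h2 hi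
  -- pp is nonadjacent to q and r
  have cpq := cross G S M hNE hL1 hL2 p hp q hq r hr npq npr nqr dpq dpr dqr pp q hPP
    ⟨hq, Or.inl rfl⟩
  have cpr := cross G S M hNE hL1 hL2 p hp r hr q hq npr npq (fun hh => nqr hh.symm)
    dpr dpq (Ne.symm dqr) pp r (PPc_swap hPP) ⟨hr, Or.inl rfl⟩
  -- step (ii) : both
  have step2 : G.Adj h q ∧ G.Adj h r := by
    rcases step1 with hq' | hr'
    · refine ⟨hq', ?_⟩
      by_contra nhr
      exact hub G S M hNE hL1 hL2 pp hppS q hq r hr cpq.1 cpr.1 nqr cpq.2 cpr.2 dqr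
        h hS hadj hq' nhr
    · refine ⟨?_, hr'⟩
      by_contra nhq
      exact hub G S M hNE hL1 hL2 pp hppS r hr q hq cpr.1 cpq.1 (fun hh => nqr hh.symm)
        cpr.2 cpq.2 (Ne.symm dqr) h hS hadj hr' nhq
  -- step (iii) Adj h p
  have step3 : G.Adj h p := by
    by_contra nhp
    exact hub G S M hNE hL1 hL2 q hq r hr p hp nqr (fun hh => npq hh.symm)
      (fun hh => npr hh.symm) dqr (Ne.symm dpq) (Ne.symm dpr) h hS step2.1 step2.2 nhp
  exact ⟨step3, step2.1, step2.2⟩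


include hNE hL1 hL2 in
lemma stepA
    (hns : ¬∃ S1 : Set V, S1 ⊆ S ∧ S1.Nonempty ∧ (S \ S1).Nonempty ∧
      ∀ u ∈ S1, ∀ w ∈ S \ S1, ¬G.Adj u w)
    (hnj : ¬∃ S1 : Set V, S1 ⊆ S ∧ S1.Nonempty ∧ (S \ S1).Nonempty ∧
      ∀ u ∈ S1, ∀ w ∈ S \ S1, G.Adj u w)
    (x y z : V) (hx : x ∈ S) (hy : y ∈ S) (hz : z ∈ S)
    (nxy : ¬G.Adj x y) (nxz : ¬G.Adj x z) (nyz : ¬G.Adj y z)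
    (dxy : x ≠ y) (dxz : x ≠ z) (dyz : y ≠ z) : False := by
  classical
  set inU : V → Prop := fun a => PPc G S x y z a ∨ PPc G S y x z a ∨ PPc G S z x y a
    with hinU
  have inUx : inU x := Or.inl ⟨hx, Or.inl rfl⟩
  have inUy : inU y := Or.inr (Or.inl ⟨hy, Or.inl rfl⟩)
  have inUz : inU z := Or.inr (Or.inr ⟨hz, Or.inl rfl⟩)
  have nyx : ¬G.Adj y x := fun h => nxy h.symm
  have nzx : ¬G.Adj z x := fun h => nxz h.symm
  have nzy : ¬G.Adj z y := fun h => nyz h.symm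
  have dyx : y ≠ x := dxy.symm
  have dzx : z ≠ x := dxz.symm
  have dzy : z ≠ y := dyz.symm
  -- every h outside U with a neighbor in U is adjacent to x, y, z
  have hAdj3 : ∀ h ∈ S, ¬inU h → ∀ u, inU u → G.Adj h u →
      G.Adj h x ∧ G.Adj h y ∧ G.Adj h z := by
    intro h hS nUh u hUu hadj
    rcases hUu with hU | hU | hU
    · exact ext1 G S M hNE hL1 hL2 x hx y hy z hz nxy nxz nyz dxy dxz dyz h hS
        (fun hc => nUh (Or.inl hc)) u hU hadj
    · obtain ⟨h1, h2, h3⟩ := ext1 G S M hNE hL1 hL2 y hy x hx z hz nyx nyz nxz dyx dyz dxz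
        h hS (fun hc => nUh (Or.inr (Or.inl hc))) u hU hadj
      exact ⟨h2, h1, h3⟩
    · obtain ⟨h1, h2, h3⟩ := ext1 G S M hNE hL1 hL2 z hz x hx y hy nzx nzy nxy dzx dzy dxy
        h hS (fun hc => nUh (Or.inr (Or.inr hc))) u hU hadj
      exact ⟨h2, h3, h1⟩
  -- generic lemma: if h is adjacent to all of x,y,z then h is adjacent to every u ∈ U
  have hAdjU : ∀ h ∈ S, G.Adj h x → G.Adj h y → G.Adj h z → ∀ u, inU u → G.Adj h u := by
    intro h hS hhx hhy hhz u hUu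
    rcases hUu with hU | hU | hU
    · -- u ∈ X* : use triple (u, y, z)
      have cy := cross G S M hNE hL1 hL2 x hx y hy z hz nxy nxz nyz dxy dxz dyz u y hU
        ⟨hy, Or.inl rfl⟩
      have cz := cross G S M hNE hL1 hL2 x hx z hz y hy nxz nxy nzy dxz dxy dzy u z
        (PPc_swap hU) ⟨hz, Or.inl rfl⟩
      by_contra nhu
      exact hub G S M hNE hL1 hL2 y hy z hz u hU.1 nyz (fun hh => cy.1 hh.symm)
        (fun hh => cz.1 hh.symm) dyz (Ne.symm cy.2) (Ne.symm cz.2) h hS hhy hhz nhu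
    · have cy := cross G S M hNE hL1 hL2 y hy x hx z hz nyx nyz nxz dyx dyz dxz u x hU
        ⟨hx, Or.inl rfl⟩
      have cz := cross G S M hNE hL1 hL2 y hy z hz x hx nyz nyx nzx dyz dyx dzx u z
        (PPc_swap hU) ⟨hz, Or.inl rfl⟩
      by_contra nhu
      exact hub G S M hNE hL1 hL2 x hx z hz u hU.1 nxz (fun hh => cy.1 hh.symm)
        (fun hh => cz.1 hh.symm) dxz (Ne.symm cy.2) (Ne.symm cz.2) h hS hhx hhz nhu
    · have cy := cross G S M hNE hL1 hL2 z hz x hx y hy nzx nzy nxy dzx dzy dxy u x hU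
        ⟨hx, Or.inl rfl⟩
      have cz := cross G S M hNE hL1 hL2 z hz y hy x hx nzy nzx nyx dzy dzx dyx u y
        (PPc_swap hU) ⟨hy, Or.inl rfl⟩
      by_contra nhu
      exact hub G S M hNE hL1 hL2 x hx y hy u hU.1 nxy (fun hh => cy.1 hh.symm)
        (fun hh => cz.1 hh.symm) dxy (Ne.symm cy.2) (Ne.symm cz.2) h hS hhx hhy nhu
  by_cases hD : ∃ h ∈ S, ¬inU h ∧ ∃ u, inU u ∧ G.Adj h u
  · -- join case
    apply hnj
    refine ⟨{h | h ∈ S ∧ ¬inU h ∧ ∃ u, inU u ∧ G.Adj h u}, fun a ha => ha.1, ?_, ?_, ?_⟩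
    · obtain ⟨h, hS, hnU, hu⟩ := hD
      exact ⟨h, hS, hnU, hu⟩
    · exact ⟨x, hx, fun hc => hc.2.1 inUx⟩
    · rintro h ⟨hS, hnU, u, hUu, hadj⟩ w ⟨hwS, hwn⟩
      obtain ⟨hhx, hhy, hhz⟩ := hAdj3 h hS hnU u hUu hadj
      by_cases hUw : inU w
      · exact hAdjU h hS hhx hhy hhz w hUw
      · -- w outside U, not in D hence no neighbor in U
        have hwno : ∀ u', inU u' → ¬G.Adj w u' := by
          intro u' hu' hadj'
          exact hwn ⟨hwS, hUw, u', hu', hadj'⟩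
        by_contra nhw
        obtain ⟨i, hi⟩ := hNE x hx
        have dwx : w ≠ x := fun hh => hUw (hh ▸ inUx)
        have dwy : w ≠ y := fun hh => hUw (hh ▸ inUy)
        have dwh : w ≠ h := fun hh => hwn (hh ▸ ⟨hS, hnU, u, hUu, hadj⟩)
        have h1 : M h i := hL2 x hx h hS w hwS hhx.symm (hwno x inUx)
          (fun hh => nhw hh.symm) dwx dwh i hi
        have h2 : M y i := hL2 h hS y hy w hwS hhy (fun hh => nhw hh.symm)
          (hwno y inUy) dwh dwy i h1
        exact hL1 x hx y hy dxy nxy i hi h2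
  · -- split case : X* is anticomplete to the rest
    apply hns
    refine ⟨{a | PPc G S x y z a}, fun a ha => ha.1, ⟨x, hx, Or.inl rfl⟩, ?_, ?_⟩
    · refine ⟨y, hy, ?_⟩
      rintro ⟨-, hc | ⟨hc, -, -⟩⟩
      · exact dyx hc
      · exact nyx hc
    · rintro a ha w ⟨hwS, hwn⟩
      by_cases hUw : inU w
      · rcases hUw with hU | hU | hU
        · exact absurd hU hwn
        · exact (cross G S M hNE hL1 hL2 x hx y hy z hz nxy nxz nyz dxy dxz dyz a w
            ha hU).1
        · exact (cross G S M hNE hL1 hL2 x hx z hz y hy nxz nxy nzy dxz dxy dzy a w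
            (PPc_swap ha) hU).1
      · intro hadj
        exact hD ⟨w, hwS, hUw, a, Or.inl ha, hadj.symm⟩


include hNE hL1 hL2 in
lemma stepB
    (hns : ¬∃ S1 : Set V, S1 ⊆ S ∧ S1.Nonempty ∧ (S \ S1).Nonempty ∧
      ∀ u ∈ S1, ∀ w ∈ S \ S1, ¬G.Adj u w)
    (hnj : ¬∃ S1 : Set V, S1 ⊆ S ∧ S1.Nonempty ∧ (S \ S1).Nonempty ∧
      ∀ u ∈ S1, ∀ w ∈ S \ S1, G.Adj u w)
    (a : V) (haS : a ∈ S) :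
    ∃ K1 K2 : Set V, (K1 ∪ K2 = S) ∧ (∀ s, s ∈ K1 → s ∈ K2 → False) ∧
      (∀ u ∈ K1, ∀ v ∈ K1, u ≠ v → G.Adj u v) ∧
      (∀ u ∈ K2, ∀ v ∈ K2, u ≠ v → G.Adj u v) := by
  classical
  set rel : V × Bool → V × Bool → Prop := fun p q =>
    p.1 ∈ S ∧ q.1 ∈ S ∧ p.1 ≠ q.1 ∧ ¬G.Adj p.1 q.1 ∧ q.2 = !p.2 with hrel
  set Reach : V × Bool → Prop := fun pr => Relation.ReflTransGen rel (a, false) pr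
    with hReach
  have inv : ∀ pr, Reach pr → pr.1 ∈ S ∧
      ((pr.2 = false ∧ ∀ i, M a i ↔ M pr.1 i) ∨
       (pr.2 = true ∧ ∃ w ∈ S, w ≠ pr.1 ∧ ¬G.Adj w pr.1 ∧ ∀ i, M a i ↔ M w i)) := by
    intro pr hpr
    induction hpr with
    | refl => exact ⟨haS, Or.inl ⟨rfl, fun i => Iff.rfl⟩⟩
    | @tail b c hr hstep ih =>
      obtain ⟨hbS, hcase⟩ := ih
      obtain ⟨-, hcS, hne, hnadj, hpar⟩ := hstep
      refine ⟨hcS, ?_⟩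
      rcases hcase with ⟨hbf, hmiss⟩ | ⟨hbt, w, hwS, hwne, hwnadj, hwmiss⟩
      · refine Or.inr ⟨by rw [hpar, hbf]; rfl, b.1, hbS, hne, hnadj, hmiss⟩
      · refine Or.inl ⟨by rw [hpar, hbt]; rfl, ?_⟩
        by_cases hwc : w = c.1
        · intro i; rw [hwmiss i, hwc]
        · by_cases hadjwc : G.Adj w c.1
          · intro i
            constructor
            · intro hai
              exact hL2 w hwS c.1 hcS b.1 hbS hadjwc (fun h => hwnadj h.symm)
                hnadj (Ne.symm hwne) hne i ((hwmiss i).1 hai)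
            · intro hci
              exact (hwmiss i).2 (hL2 c.1 hcS w hwS b.1 hbS hadjwc.symm hnadj
                (fun h => hwnadj h.symm) hne (Ne.symm hwne) i hci)
          · exact absurd (stepA G S M hNE hL1 hL2 hns hnj w b.1 c.1 hwS hbS hcS
              hwnadj hadjwc hnadj hwne hwc hne) (fun h => h)
  have hall : ∀ s ∈ S, ∃ b, Reach (s, b) := by
    by_contra hcon
    push_neg at hcon
    obtain ⟨s0, hs0S, hs0⟩ := hcon
    apply hnj
    refine ⟨{u | u ∈ S ∧ ∃ b, Reach (u, b)}, fun u hu => hu.1,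
      ⟨a, haS, false, Relation.ReflTransGen.refl⟩, ⟨s0, hs0S, fun hc => ?_⟩, ?_⟩
    · obtain ⟨-, b, hb⟩ := hc
      exact hs0 b hb
    · rintro u ⟨huS, b, hb⟩ w ⟨hwS, hwn⟩
      by_contra hn
      have hne : u ≠ w := by
        intro hh; subst hh; exact hwn ⟨huS, b, hb⟩
      exact hwn ⟨hwS, !b, Relation.ReflTransGen.tail hb ⟨huS, hwS, hne, hn, rfl⟩⟩
  have notboth : ∀ s, s ∈ S → Reach (s, false) → Reach (s, true) → False := by
    intro s hsS h1 h2
    obtain ⟨-, hc1⟩ := inv _ h1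
    obtain ⟨-, hc2⟩ := inv _ h2
    rcases hc1 with ⟨-, hm1⟩ | ⟨hb, -⟩
    · rcases hc2 with ⟨hb, -⟩ | ⟨-, w, hwS, hwne, hwnadj, hm2⟩
      · exact Bool.noConfusion hb
      · obtain ⟨i, hi⟩ := hNE a haS
        exact hL1 w hwS s hsS hwne hwnadj i ((hm2 i).1 hi) ((hm1 i).1 hi)
    · exact Bool.noConfusion hb
  refine ⟨{s | s ∈ S ∧ Reach (s, false)}, {s | s ∈ S ∧ Reach (s, true)}, ?_, ?_, ?_, ?_⟩
  · apply Set.eq_of_subset_of_subset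
    · rintro s (⟨hs, -⟩ | ⟨hs, -⟩) <;> exact hs
    · intro s hs
      obtain ⟨b, hb⟩ := hall s hs
      cases b
      · exact Or.inl ⟨hs, hb⟩
      · exact Or.inr ⟨hs, hb⟩
  · rintro s ⟨hsS, h1⟩ ⟨-, h2⟩
    exact notboth s hsS h1 h2
  · rintro u ⟨huS, h1⟩ v ⟨hvS, h2⟩ hne
    by_contra hnadj
    obtain ⟨-, hc1⟩ := inv _ h1
    obtain ⟨-, hc2⟩ := inv _ h2
    rcases hc1 with ⟨-, hm1⟩ | ⟨hb, -⟩
    · rcases hc2 with ⟨-, hm2⟩ | ⟨hb, -⟩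
      · obtain ⟨i, hi⟩ := hNE a haS
        exact hL1 u huS v hvS hne hnadj i ((hm1 i).1 hi) ((hm2 i).1 hi)
      · exact Bool.noConfusion hb
    · exact Bool.noConfusion hb
  · rintro u ⟨huS, h1⟩ v ⟨hvS, h2⟩ hne
    by_contra hnadj
    exact notboth v hvS
      (Relation.ReflTransGen.tail h1 ⟨huS, hvS, hne, hnadj, rfl⟩) h2

end ABS

theorem absMain {V ι : Type} [Fintype V] (G : SimpleGraph V) (T : Set V) (M : V → ι → Prop)
    (hNE : ∀ a ∈ T, ∃ i, M a i)
    (hL1 : ∀ a ∈ T, ∀ b ∈ T, a ≠ b → ¬G.Adj a b → ∀ i, M a i → M b i → False)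
    (hL2 : ∀ a ∈ T, ∀ b ∈ T, ∀ c ∈ T, G.Adj a b → ¬G.Adj c a → ¬G.Adj c b →
      c ≠ a → c ≠ b → ∀ i, M a i → M b i) :
    ∀ (n : ℕ) (S : Set V), S.ncard ≤ n → S ⊆ T →
      (G.induce S).Colorable ((G.induce S).cliqueNum) := by
  have hempty : (G.induce (∅ : Set V)).Colorable ((G.induce (∅ : Set V)).cliqueNum) := by
    haveI : IsEmpty ↥(∅ : Set V) := by
      simp only [Set.isEmpty_coe_sort]
    exact Colorable.of_isEmpty _
  intro n
  induction n with
  | zero =>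
    intro S hcard hST
    have hS0 : S.ncard = 0 := Nat.le_zero.1 hcard
    have : S = ∅ := (Set.ncard_eq_zero S.toFinite).1 hS0
    rw [this]
    exact hempty
  | succ n ih =>
    intro S hcard hST
    rcases Set.eq_empty_or_nonempty S with rfl | hSne
    · exact hempty
    by_cases hsplit : ∃ S1 : Set V, S1 ⊆ S ∧ S1.Nonempty ∧ (S \ S1).Nonempty ∧
        ∀ u ∈ S1, ∀ w ∈ S \ S1, ¬G.Adj u w
    · obtain ⟨S1, hsub, hne1, hne2, hanti⟩ := hsplit
      have hss1 : S1 ⊂ S := by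
        refine ssubset_of_subset_of_ne hsub ?_
        obtain ⟨w, hwS, hwn⟩ := hne2
        rintro rfl
        exact hwn hwS
      have hss2 : S \ S1 ⊂ S := by
        refine ssubset_of_subset_of_ne Set.diff_subset ?_
        obtain ⟨x, hx⟩ := hne1
        intro heq
        have hxS : x ∈ S := hsub hx
        rw [← heq] at hxS
        exact hxS.2 hx
      have hlt1 : S1.ncard ≤ n := by
        have := Set.ncard_lt_ncard hss1 S.toFinite
        omega
      have hlt2 : (S \ S1).ncard ≤ n := by
        have := Set.ncard_lt_ncard hss2 S.toFinite
        omega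
      have c1 := (ih S1 hlt1 (hsub.trans hST)).mono (cliqueNum_mono G S1 S hsub)
      have c2 := (ih (S \ S1) hlt2 (Set.diff_subset.trans hST)).mono
        (cliqueNum_mono G (S \ S1) S Set.diff_subset)
      exact colorable_split G S1 S _ hanti c1 c2
    by_cases hjoin : ∃ S1 : Set V, S1 ⊆ S ∧ S1.Nonempty ∧ (S \ S1).Nonempty ∧
        ∀ u ∈ S1, ∀ w ∈ S \ S1, G.Adj u w
    · obtain ⟨S1, hsub, hne1, hne2, hcomp⟩ := hjoin
      have hss1 : S1 ⊂ S := by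
        refine ssubset_of_subset_of_ne hsub ?_
        obtain ⟨w, hwS, hwn⟩ := hne2
        rintro rfl
        exact hwn hwS
      have hss2 : S \ S1 ⊂ S := by
        refine ssubset_of_subset_of_ne Set.diff_subset ?_
        obtain ⟨x, hx⟩ := hne1
        intro heq
        have hxS : x ∈ S := hsub hx
        rw [← heq] at hxS
        exact hxS.2 hx
      have hlt1 : S1.ncard ≤ n := by
        have := Set.ncard_lt_ncard hss1 S.toFinite
        omega
      have hlt2 : (S \ S1).ncard ≤ n := by
        have := Set.ncard_lt_ncard hss2 S.toFinite
        omega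
      have c1 := ih S1 hlt1 (hsub.trans hST)
      have c2 := ih (S \ S1) hlt2 (Set.diff_subset.trans hST)
      exact (colorable_join G S1 S _ _ c1 c2).mono (cliqueNum_join_ge G S1 S hsub hcomp)
    · classical
      obtain ⟨a, haS⟩ := hSne
      have hNE' : ∀ b ∈ S, ∃ i, M b i := fun b hb => hNE b (hST hb)
      have hL1' : ∀ a ∈ S, ∀ b ∈ S, a ≠ b → ¬G.Adj a b → ∀ i, M a i → M b i → False :=
        fun a ha b hb => hL1 a (hST ha) b (hST hb)
      have hL2' : ∀ a ∈ S, ∀ b ∈ S, ∀ c ∈ S, G.Adj a b → ¬G.Adj c a → ¬G.Adj c b →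
          c ≠ a → c ≠ b → ∀ i, M a i → M b i :=
        fun a ha b hb c hc => hL2 a (hST ha) b (hST hb) c (hST hc)
      obtain ⟨K1, K2, hunion, hnotboth, hcl1, hcl2⟩ :=
        stepB G S M hNE' hL1' hL2' hsplit hjoin a haS
      refine koenig G S K1.toFinite.toFinset K2.toFinite.toFinset ?_ ?_ ?_ ?_
      · rw [Set.Finite.coe_toFinset, Set.Finite.coe_toFinset]
        exact hunion
      · rw [Finset.disjoint_left]
        intro s hs1 hs2
        rw [Set.Finite.mem_toFinset] at hs1 hs2
        exact hnotboth s hs1 hs2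
      · intro u hu v hv
        rw [Set.Finite.mem_toFinset] at hu hv
        exact hcl1 u hu v hv
      · intro u hu v hv
        rw [Set.Finite.mem_toFinset] at hu hv
        exact hcl2 u hu v hv

lemma half (q : ℕ) (V : Type) [Fintype V] (G : SimpleGraph V) (hfree : _root_.Free G (tBroom 2))
    (v : Fin (q - 1) → V) (w w' : V) (hne : w ≠ w')
    (hdisjq : ∀ i, v i ≠ w ∧ v i ≠ w')
    (hindepq : ¬ G.Adj w w')
    (hcompq : ∀ i, G.Adj (v i) w ∧ G.Adj (v i) w') :
    (∀ S : Set V,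
        S ⊆ {x ∈ nbhd G (Set.range v ∪ {w, w'}) | NeutralTo G x {w, w'} ∧
              ¬ CompleteTo G x ((Set.range v ∪ {w, w'}) \ {w, w'})} ∩
            G.neighborSet w →
        (G.induce S).chromaticNumber = ((G.induce S).cliqueNum : ℕ∞)) := by
  classical
  intro S hsub
  set T : Set V := {x ∈ nbhd G (Set.range v ∪ {w, w'}) | NeutralTo G x {w, w'} ∧
      ¬ CompleteTo G x ((Set.range v ∪ {w, w'}) \ {w, w'})} ∩ G.neighborSet w with hT
  -- fact extraction for members of T
  have hfacts : ∀ x ∈ T, G.Adj w x ∧ ¬G.Adj x w' ∧ x ∉ Set.range v ∧ x ≠ w ∧ x ≠ w' ∧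
      ∃ i, ¬ G.Adj x (v i) := by
    intro x hx
    obtain ⟨⟨hnb, hneu, hncomp⟩, hnbr⟩ := hx
    have hadjw : G.Adj w x := hnbr
    obtain ⟨hnotin, -⟩ := hnb
    have hxr : x ∉ Set.range v := fun h => hnotin (Or.inl h)
    have hxw : x ≠ w := fun h => hnotin (Or.inr (Or.inl h))
    have hxw' : x ≠ w' := fun h => hnotin (Or.inr (Or.inr h))
    have hnadjw' : ¬ G.Adj x w' := by
      have h1 := hneu.1
      rw [CompleteTo] at h1
      push_neg at h1
      obtain ⟨u, hu, hnadj⟩ := h1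
      rcases hu with rfl | rfl
      · exact absurd hadjw.symm hnadj
      · exact hnadj
    have hmiss : ∃ i, ¬ G.Adj x (v i) := by
      rw [CompleteTo] at hncomp
      push_neg at hncomp
      obtain ⟨u, hu, hnadj⟩ := hncomp
      obtain ⟨hu1, hu2⟩ := hu
      rcases hu1 with ⟨i, rfl⟩ | hu1
      · exact ⟨i, hnadj⟩
      · exact absurd hu1 hu2
    exact ⟨hadjw, hnadjw', hxr, hxw, hxw', hmiss⟩
  set M : V → Fin (q-1) → Prop := fun x i => ¬ G.Adj x (v i) with hM
  have hNE : ∀ a ∈ T, ∃ i, M a i := fun a ha => (hfacts a ha).2.2.2.2.2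
  have hL1 : ∀ a ∈ T, ∀ b ∈ T, a ≠ b → ¬G.Adj a b → ∀ i, M a i → M b i → False := by
    intro a ha b hb hab hnadj i hMa hMb
    obtain ⟨haw, haw', har, hanw, hanw', -⟩ := hfacts a ha
    obtain ⟨hbw, hbw', hbr, hbnw, hbnw', -⟩ := hfacts b hb
    exact chair_free G hfree w (v i) w' a b
      ((hcompq i).1.symm) ((hcompq i).2) haw hbw
      hindepq (fun h => hMa h.symm) (fun h => hMb h.symm)
      (fun h => haw' h.symm) (fun h => hbw' h.symm) hnadj
      hne (fun h => har ⟨i, h⟩) (fun h => hbr ⟨i, h⟩)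
      (Ne.symm hanw') (Ne.symm hbnw') hab
  have hL2 : ∀ a ∈ T, ∀ b ∈ T, ∀ c ∈ T, G.Adj a b → ¬G.Adj c a → ¬G.Adj c b →
      c ≠ a → c ≠ b → ∀ i, M a i → M b i := by
    intro a ha b hb c hc hab hnca hncb hca hcb i hMa
    obtain ⟨haw, haw', har, hanw, hanw', -⟩ := hfacts a ha
    obtain ⟨hbw, hbw', hbr, hbnw, hbnw', -⟩ := hfacts b hb
    obtain ⟨hcw, hcw', hcr, hcnw, hcnw', -⟩ := hfacts c hc
    by_contra hMb
    have hbv : G.Adj b (v i) := hMb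
    have hcv : G.Adj c (v i) := by
      by_contra hMc
      exact hL1 a ha c hc (Ne.symm hca) (fun h => hnca h.symm) i hMa hMc
    exact chair_free G hfree (v i) b a w' c
      hbv.symm hab.symm ((hcompq i).2) hcv.symm
      (fun h => hMa h.symm) hbw' (fun h => hncb h.symm) haw'
      (fun h => hnca h.symm) (fun h => hcw' h.symm)
      (fun h => har ⟨i, h⟩) hbnw' (Ne.symm hcb) hanw' (Ne.symm hca) (Ne.symm hcnw')
  have hcol : (G.induce S).Colorable ((G.induce S).cliqueNum) :=
    absMain G T M hNE hL1 hL2 S.ncard S le_rfl hsub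
  haveI : Fintype ↥S := Fintype.ofFinite ↥S
  refine le_antisymm hcol.chromaticNumber_le ?_
  obtain ⟨s, hs⟩ := (G.induce S).exists_isNClique_cliqueNum
  have h1 := hs.1.card_le_chromaticNumber
  rwa [hs.2] at h1


/-- Lemma 2.5. Let `G` be chair-free, `Q` complete `q`-partite with parts
`V_1 = {v 1}, …, V_{q-1} = {v (q-1)}` singletons and `V_q = {vq, vq'}`, and
`A = {x ∈ N(V(Q)) : x neutral to V_q, not complete to V(Q) \ V_q}`.  Then both
`G[A ∩ N(vq)]` and `G[A ∩ N(vq')]` are perfect: every induced subgraph `H` of either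
satisfies `χ(H) = ω(H)`. -/
theorem A_inter_nbr_perfect (q : ℕ) (hq : 2 ≤ q)
    (V : Type) [Fintype V] (G : SimpleGraph V) (hfree : _root_.Free G (tBroom 2))
    (v : Fin (q - 1) → V) (vq vq' : V) (hne : vq ≠ vq')
    (hinj : Function.Injective v)
    (hdisjq : ∀ i, v i ≠ vq ∧ v i ≠ vq')
    (hindepq : ¬ G.Adj vq vq')
    (hcomp : ∀ i j, i ≠ j → G.Adj (v i) (v j))
    (hcompq : ∀ i, G.Adj (v i) vq ∧ G.Adj (v i) vq') :
    (∀ S : Set V,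
        S ⊆ {x ∈ nbhd G (Set.range v ∪ {vq, vq'}) | NeutralTo G x {vq, vq'} ∧
              ¬ CompleteTo G x ((Set.range v ∪ {vq, vq'}) \ {vq, vq'})} ∩
            G.neighborSet vq →
        (G.induce S).chromaticNumber = ((G.induce S).cliqueNum : ℕ∞)) ∧
      (∀ S : Set V,
        S ⊆ {x ∈ nbhd G (Set.range v ∪ {vq, vq'}) | NeutralTo G x {vq, vq'} ∧
              ¬ CompleteTo G x ((Set.range v ∪ {vq, vq'}) \ {vq, vq'})} ∩
            G.neighborSet vq' →
        (G.induce S).chromaticNumber = ((G.induce S).cliqueNum : ℕ∞)) := by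
  constructor
  · exact half q V G hfree v vq vq' hne hdisjq hindepq hcompq
  · have h2 := half q V G hfree v vq' vq hne.symm
      (fun i => ⟨(hdisjq i).2, (hdisjq i).1⟩) (fun h => hindepq h.symm)
      (fun i => ⟨(hcompq i).2, (hcompq i).1⟩)
    rw [Set.pair_comm vq' vq] at h2
    exact h2
end

section
/- Let t ≥ 2 and q ≥ 2 be integers, let G be a finite t-broom-free graph, and let V_1, …, V_q be pairwise disjoint nonempty independent sets in G with |V_q| = t such that Q := G[V_1 ∪ ⋯ ∪ V_q] is a complete q-partite graph with parts V_1, …, V_q. Let W = {v ∈ N(V(Q)) : v is anticomplete to V_q}. Then W is anticomplete to N^2(V(Q)); that is, no vertex of W has a neighbor at distance exactly 2 from V(Q). -/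
open SimpleGraph

private lemma tBroom_adj_iff {t : ℕ} (a b : Fin (t+3)) :
    (tBroom t).Adj a b ↔ a.val ≠ b.val ∧
      ((a.val = 0 ∧ b.val = 1) ∨ (a.val = 1 ∧ b.val = 2) ∨ (a.val = 0 ∧ 3 ≤ b.val) ∨
       (b.val = 0 ∧ a.val = 1) ∨ (b.val = 1 ∧ a.val = 2) ∨ (b.val = 0 ∧ 3 ≤ a.val)) := by
  have h0 : ((0 : Fin (t+3)) : ℕ) = 0 := rfl
  have h1 : ((1 : Fin (t+3)) : ℕ) = 1 := by
    show 1 % (t+3) = 1; exact Nat.mod_eq_of_lt (by omega)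
  have h2 : ((2 : Fin (t+3)) : ℕ) = 2 := by
    show 2 % (t+3) = 2; exact Nat.mod_eq_of_lt (by omega)
  simp only [tBroom, SimpleGraph.fromRel_adj, Fin.ext_iff, h0, h1, h2, ne_eq]
  omega

/-- part of Claim 4.1. With `Q = G[V_1 ∪ ⋯ ∪ V_q]` complete `q`-partite and
`W = {v ∈ N(V(Q)) : v anticomplete to V_q}`, no vertex of `W` has a neighbor at distance
exactly `2` from `V(Q)`. -/
theorem W_anticomplete_distTwo (t q : ℕ) (ht : 2 ≤ t) (hq : 2 ≤ q)
    (V : Type) [Fintype V] (G : SimpleGraph V) (hfree : _root_.Free G (tBroom t))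
    (Vs : Fin (q - 1) → Set V) (Vq : Set V)
    (hne : ∀ i, (Vs i).Nonempty) (hVq : Vq.ncard = t)
    (hdisj : ∀ i j, i ≠ j → Disjoint (Vs i) (Vs j))
    (hdisjq : ∀ i, Disjoint (Vs i) Vq)
    (hindep : ∀ i, ∀ u ∈ Vs i, ∀ w ∈ Vs i, ¬ G.Adj u w)
    (hindepq : ∀ u ∈ Vq, ∀ w ∈ Vq, ¬ G.Adj u w)
    (hcomp : ∀ i j, i ≠ j → ∀ u ∈ Vs i, ∀ w ∈ Vs j, G.Adj u w)
    (hcompq : ∀ i, ∀ u ∈ Vs i, ∀ w ∈ Vq, G.Adj u w) :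
    ∀ w ∈ {v ∈ nbhd G ((⋃ i, Vs i) ∪ Vq) | AnticompleteTo G v Vq},
      ∀ y ∈ distNbhd G ((⋃ i, Vs i) ∪ Vq) 2, ¬ G.Adj w y := by
  classical
  intro w hw y hy hwy
  simp only [Set.mem_setOf_eq, nbhd] at hw hy
  obtain ⟨⟨hwS, x, hxS0, hxw⟩, hwVq⟩ := hw
  simp only [distNbhd, Set.mem_setOf_eq] at hy
  obtain ⟨hyS, hyd⟩ := hy
  -- y is adjacent to nothing in S
  have hyadj : ∀ u ∈ (⋃ i, Vs i) ∪ Vq, ¬ G.Adj u y := by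
    intro u hu hadj
    have h1 : eDistSet G ((⋃ i, Vs i) ∪ Vq) y ≤ G.edist u y := by
      unfold eDistSet; exact iInf₂_le u hu
    rw [hyd, (G.edist_eq_one_iff_adj).mpr hadj] at h1
    norm_num at h1
  obtain ⟨ix, hx⟩ : ∃ i, x ∈ Vs i := by
    rcases hxS0 with hxU | hxq
    · exact Set.mem_iUnion.mp hxU
    · exact absurd hxw.symm (hwVq x hxq)
  have hxS : x ∈ (⋃ i, Vs i) ∪ Vq := Or.inl (Set.mem_iUnion.mpr ⟨ix, hx⟩)
  have hxVq : x ∉ Vq := fun h => Set.disjoint_left.mp (hdisjq ix) hx h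
  have hwVq' : w ∉ Vq := fun h => hwS (Or.inr h)
  have hyVq' : y ∉ Vq := fun h => hyS (Or.inr h)
  have hxy : ¬ G.Adj x y := hyadj x hxS
  have hyVqadj : ∀ v ∈ Vq, ¬ G.Adj y v := fun v hv h => hyadj v (Or.inr hv) h.symm
  have hxVqadj : ∀ v ∈ Vq, G.Adj x v := fun v hv => hcompq ix x hx v hv
  have hxny : x ≠ y := fun h => hyS (h ▸ hxS)
  have hxnw : x ≠ w := hxw.ne
  have hwny : w ≠ y := hwy.ne
  -- enumerate Vq
  obtain ⟨e, heinj, heVq⟩ : ∃ e : Fin t → V, Function.Injective e ∧ ∀ k, e k ∈ Vq := by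
    have hcard : Vq.toFinset.card = t := by
      rw [← Set.ncard_eq_toFinset_card']; exact hVq
    exact ⟨fun k => ((Vq.toFinset.equivFinOfCardEq hcard).symm k : V),
      fun a b h => (Vq.toFinset.equivFinOfCardEq hcard).symm.injective (Subtype.ext h),
      fun k => Set.mem_toFinset.mp ((Vq.toFinset.equivFinOfCardEq hcard).symm k).2⟩
  set f : Fin (t+3) → V := fun a =>
    if a.val = 0 then x else if a.val = 1 then w else if a.val = 2 then y
    else e ⟨a.val - 3, by have := a.isLt; omega⟩ with hfdef
  have hf0 : ∀ a : Fin (t+3), a.val = 0 → f a = x := by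
    intro a h; rw [hfdef]; dsimp only; rw [if_pos h]
  have hf1 : ∀ a : Fin (t+3), a.val = 1 → f a = w := by
    intro a h; rw [hfdef]; dsimp only; rw [if_neg (by omega), if_pos h]
  have hf2 : ∀ a : Fin (t+3), a.val = 2 → f a = y := by
    intro a h; rw [hfdef]; dsimp only; rw [if_neg (by omega), if_neg (by omega), if_pos h]
  have hf3 : ∀ a : Fin (t+3), (h : 3 ≤ a.val) →
      f a = e ⟨a.val - 3, by have := a.isLt; omega⟩ := by
    intro a h; rw [hfdef]; dsimp only
    rw [if_neg (by omega), if_neg (by omega), if_neg (by omega)]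
  have hinj : Function.Injective f := by
    intro a b hab
    have ha := a.isLt; have hb := b.isLt
    rcases (show a.val = 0 ∨ a.val = 1 ∨ a.val = 2 ∨ 3 ≤ a.val by omega) with h|h|h|h
    · rcases (show b.val = 0 ∨ b.val = 1 ∨ b.val = 2 ∨ 3 ≤ b.val by omega) with h'|h'|h'|h'
      · exact Fin.ext (by omega)
      · rw [hf0 a h, hf1 b h'] at hab; exact absurd hab hxnw
      · rw [hf0 a h, hf2 b h'] at hab; exact absurd hab hxny
      · rw [hf0 a h, hf3 b h'] at hab
        exact absurd (by rw [hab]; exact heVq _) hxVq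
    · rcases (show b.val = 0 ∨ b.val = 1 ∨ b.val = 2 ∨ 3 ≤ b.val by omega) with h'|h'|h'|h'
      · rw [hf1 a h, hf0 b h'] at hab; exact absurd hab.symm hxnw
      · exact Fin.ext (by omega)
      · rw [hf1 a h, hf2 b h'] at hab; exact absurd hab hwny
      · rw [hf1 a h, hf3 b h'] at hab
        exact absurd (by rw [hab]; exact heVq _) hwVq'
    · rcases (show b.val = 0 ∨ b.val = 1 ∨ b.val = 2 ∨ 3 ≤ b.val by omega) with h'|h'|h'|h'
      · rw [hf2 a h, hf0 b h'] at hab; exact absurd hab.symm hxny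
      · rw [hf2 a h, hf1 b h'] at hab; exact absurd hab.symm hwny
      · exact Fin.ext (by omega)
      · rw [hf2 a h, hf3 b h'] at hab
        exact absurd (by rw [hab]; exact heVq _) hyVq'
    · rcases (show b.val = 0 ∨ b.val = 1 ∨ b.val = 2 ∨ 3 ≤ b.val by omega) with h'|h'|h'|h'
      · rw [hf3 a h, hf0 b h'] at hab
        exact absurd (by rw [← hab]; exact heVq _) hxVq
      · rw [hf3 a h, hf1 b h'] at hab
        exact absurd (by rw [← hab]; exact heVq _) hwVq'
      · rw [hf3 a h, hf2 b h'] at hab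
        exact absurd (by rw [← hab]; exact heVq _) hyVq'
      · rw [hf3 a h, hf3 b h'] at hab
        have := congrArg Fin.val (heinj hab)
        simp only at this
        exact Fin.ext (by omega)
  have hmap : ∀ a b : Fin (t+3), G.Adj (f a) (f b) ↔ (tBroom t).Adj a b := by
    intro a b
    have ha := a.isLt; have hb := b.isLt
    rw [tBroom_adj_iff]
    rcases (show a.val = 0 ∨ a.val = 1 ∨ a.val = 2 ∨ 3 ≤ a.val by omega) with h|h|h|h
    · rcases (show b.val = 0 ∨ b.val = 1 ∨ b.val = 2 ∨ 3 ≤ b.val by omega) with h'|h'|h'|h'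
      · rw [hf0 a h, hf0 b h']
        exact iff_of_false (G.irrefl) (by intro hc; omega)
      · rw [hf0 a h, hf1 b h']
        exact iff_of_true hxw ⟨by omega, by omega⟩
      · rw [hf0 a h, hf2 b h']
        exact iff_of_false hxy (by intro hc; omega)
      · rw [hf0 a h, hf3 b h']
        exact iff_of_true (hxVqadj _ (heVq _)) ⟨by omega, by omega⟩
    · rcases (show b.val = 0 ∨ b.val = 1 ∨ b.val = 2 ∨ 3 ≤ b.val by omega) with h'|h'|h'|h'
      · rw [hf1 a h, hf0 b h']
        exact iff_of_true hxw.symm ⟨by omega, by omega⟩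
      · rw [hf1 a h, hf1 b h']
        exact iff_of_false (G.irrefl) (by intro hc; omega)
      · rw [hf1 a h, hf2 b h']
        exact iff_of_true hwy ⟨by omega, by omega⟩
      · rw [hf1 a h, hf3 b h']
        exact iff_of_false (hwVq _ (heVq _)) (by intro hc; omega)
    · rcases (show b.val = 0 ∨ b.val = 1 ∨ b.val = 2 ∨ 3 ≤ b.val by omega) with h'|h'|h'|h'
      · rw [hf2 a h, hf0 b h']
        exact iff_of_false (fun hc => hxy hc.symm) (by intro hc; omega)
      · rw [hf2 a h, hf1 b h']
        exact iff_of_true hwy.symm ⟨by omega, by omega⟩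
      · rw [hf2 a h, hf2 b h']
        exact iff_of_false (G.irrefl) (by intro hc; omega)
      · rw [hf2 a h, hf3 b h']
        exact iff_of_false (hyVqadj _ (heVq _)) (by intro hc; omega)
    · rcases (show b.val = 0 ∨ b.val = 1 ∨ b.val = 2 ∨ 3 ≤ b.val by omega) with h'|h'|h'|h'
      · rw [hf3 a h, hf0 b h']
        exact iff_of_true (hxVqadj _ (heVq _)).symm ⟨by omega, by omega⟩
      · rw [hf3 a h, hf1 b h']
        exact iff_of_false (fun hc => hwVq _ (heVq _) hc.symm) (by intro hc; omega)
      · rw [hf3 a h, hf2 b h']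
        exact iff_of_false (fun hc => hyVqadj _ (heVq _) hc.symm) (by intro hc; omega)
      · rw [hf3 a h, hf3 b h']
        exact iff_of_false (hindepq _ (heVq _) _ (heVq _)) (by intro hc; omega)
  exact hfree ⟨⟨⟨f, hinj⟩, fun {a b} => hmap a b⟩⟩
end
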